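/- arXiv:math/0703366 — 3 statements merged into one kernel-verified Lean document; each statement's English description precedes it below -/
import Mathlib

section
/- In the polynomial ring k[x,y,z,w] over a field k of characteristic zero, the ideal I₂ = (x² + yw, y² + zw, z² + xw) is a radical ideal. -/
open MvPolynomial

noncomputable section

namespace Stmt0Aux

variable (k : Type) [Field k]
set_option linter.unusedSectionVars false

abbrev R4 := MvPolynomial (Fin 4) k

def Ii : Ideal (R4 k) := Ideal.span {(X 0 : R4 k) ^ 2 + X 1 * X 3,
    (X 1 : R4 k) ^ 2 + X 2 * X 3, (X 2 : R4 k) ^ 2 + X 0 * X 3}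

lemma mem_Ii (c1 c2 c3 g : R4 k)
    (h : g = c1 * ((X 0 : R4 k) ^ 2 + X 1 * X 3) + c2 * ((X 1 : R4 k) ^ 2 + X 2 * X 3)
      + c3 * ((X 2 : R4 k) ^ 2 + X 0 * X 3)) : g ∈ Ii k := by
  rw [h]
  refine Ideal.add_mem _ (Ideal.add_mem _ ?_ ?_) ?_ <;>
    refine Ideal.mul_mem_left _ _ (Ideal.subset_span ?_)
  · left; rfl
  · right; left; rfl
  · right; right; rfl

def b : Fin 8 → R4 k := ![1, X 0, X 1, X 2, X 0 * X 1, X 0 * X 2, X 1 * X 2, X 0 * X 1 * X 2]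

def P2M : Polynomial k →ₐ[k] R4 k := Polynomial.aeval (X 3)

def NF (p : Fin 8 → Polynomial k) : R4 k := ∑ i, P2M k (p i) * b k i

def Good (f : R4 k) : Prop := ∃ p : Fin 8 → Polynomial k, f - NF k p ∈ Ii k

variable {k}

lemma good_of_mem {f : R4 k} (hf : f ∈ Ii k) : Good k f :=
  ⟨0, by simpa [NF] using hf⟩

lemma good_add {f g : R4 k} (hf : Good k f) (hg : Good k g) : Good k (f + g) := by
  obtain ⟨p, hp⟩ := hf; obtain ⟨q, hq⟩ := hg
  refine ⟨p + q, ?_⟩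
  have hNF : NF k (p + q) = NF k p + NF k q := by
    simp only [NF, Pi.add_apply, map_add, add_mul, Finset.sum_add_distrib]
  have : f + g - NF k (p + q) = (f - NF k p) + (g - NF k q) := by rw [hNF]; ring
  rw [this]; exact Ideal.add_mem _ hp hq

lemma good_smul (q : Polynomial k) {f : R4 k} (hf : Good k f) : Good k (P2M k q * f) := by
  obtain ⟨p, hp⟩ := hf
  refine ⟨fun j => q * p j, ?_⟩
  have hNF : NF k (fun j => q * p j) = P2M k q * NF k p := by
    simp only [NF, map_mul, Finset.mul_sum, mul_assoc]
  have : P2M k q * f - NF k (fun j => q * p j) = P2M k q * (f - NF k p) := by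
    rw [hNF]; ring
  rw [this]; exact Ideal.mul_mem_left _ _ hp

lemma good_sum {ι : Type} (s : Finset ι) (g : ι → R4 k) (h : ∀ i ∈ s, Good k (g i)) :
    Good k (∑ i ∈ s, g i) := by
  classical
  induction s using Finset.induction_on with
  | empty => exact ⟨0, by simp [NF]⟩
  | insert _ _ hx ih =>
    rw [Finset.sum_insert hx]
    exact good_add (h _ (Finset.mem_insert_self _ _))
      (ih fun i hi => h i (Finset.mem_insert_of_mem hi))

lemma good_cert (f : R4 k) (q0 q1 q2 q3 q4 q5 q6 q7 : Polynomial k)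
    (h : f - (P2M k q0 * 1 + P2M k q1 * X 0 + P2M k q2 * X 1 + P2M k q3 * X 2
      + P2M k q4 * (X 0 * X 1) + P2M k q5 * (X 0 * X 2) + P2M k q6 * (X 1 * X 2)
      + P2M k q7 * (X 0 * X 1 * X 2)) ∈ Ii k) : Good k f := by
  refine ⟨![q0, q1, q2, q3, q4, q5, q6, q7], ?_⟩
  have hNF : NF k ![q0, q1, q2, q3, q4, q5, q6, q7]
      = P2M k q0 * 1 + P2M k q1 * X 0 + P2M k q2 * X 1 + P2M k q3 * X 2
      + P2M k q4 * (X 0 * X 1) + P2M k q5 * (X 0 * X 2) + P2M k q6 * (X 1 * X 2)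
      + P2M k q7 * (X 0 * X 1 * X 2) := by
    simp only [NF, Fin.sum_univ_eight]; rfl
  rw [hNF]; exact h

lemma good_Xmul_b (n : Fin 4) (i : Fin 8) : Good k (X n * b k i) := by
  fin_cases n <;> fin_cases i
  · show Good k (X 0 * (1))
    exact good_cert (k := k) _ (0) (1) (0) (0) (0) (0) (0) (0) (mem_Ii k (0) (0) (0) _
      (by simp only [P2M, map_neg, map_pow, map_one, map_zero, Polynomial.aeval_X]; ring))
  · show Good k (X 0 * (X 0))
    exact good_cert (k := k) _ (0) (0) (-Polynomial.X) (0) (0) (0) (0) (0) (mem_Ii k (1) (0) (0) _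
      (by simp only [P2M, map_neg, map_pow, map_one, map_zero, Polynomial.aeval_X]; ring))
  · show Good k (X 0 * (X 1))
    exact good_cert (k := k) _ (0) (0) (0) (0) (1) (0) (0) (0) (mem_Ii k (0) (0) (0) _
      (by simp only [P2M, map_neg, map_pow, map_one, map_zero, Polynomial.aeval_X]; ring))
  · show Good k (X 0 * (X 2))
    exact good_cert (k := k) _ (0) (0) (0) (0) (0) (1) (0) (0) (mem_Ii k (0) (0) (0) _
      (by simp only [P2M, map_neg, map_pow, map_one, map_zero, Polynomial.aeval_X]; ring))
  · show Good k (X 0 * (X 0 * X 1))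
    exact good_cert (k := k) _ (0) (0) (0) (Polynomial.X^2) (0) (0) (0) (0) (mem_Ii k (X 1) (-X 3) (0) _
      (by simp only [P2M, map_neg, map_pow, map_one, map_zero, Polynomial.aeval_X]; ring))
  · show Good k (X 0 * (X 0 * X 2))
    exact good_cert (k := k) _ (0) (0) (0) (0) (0) (0) (-Polynomial.X) (0) (mem_Ii k (X 2) (0) (0) _
      (by simp only [P2M, map_neg, map_pow, map_one, map_zero, Polynomial.aeval_X]; ring))
  · show Good k (X 0 * (X 1 * X 2))
    exact good_cert (k := k) _ (0) (0) (0) (0) (0) (0) (0) (1) (mem_Ii k (0) (0) (0) _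
      (by simp only [P2M, map_neg, map_pow, map_one, map_zero, Polynomial.aeval_X]; ring))
  · show Good k (X 0 * (X 0 * X 1 * X 2))
    exact good_cert (k := k) _ (0) (-Polynomial.X^3) (0) (0) (0) (0) (0) (0) (mem_Ii k (X 1 * X 2) (-(X 2 * X 3)) (X 3 ^ 2) _
      (by simp only [P2M, map_neg, map_pow, map_one, map_zero, Polynomial.aeval_X]; ring))
  · show Good k (X 1 * (1))
    exact good_cert (k := k) _ (0) (0) (1) (0) (0) (0) (0) (0) (mem_Ii k (0) (0) (0) _
      (by simp only [P2M, map_neg, map_pow, map_one, map_zero, Polynomial.aeval_X]; ring))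
  · show Good k (X 1 * (X 0))
    exact good_cert (k := k) _ (0) (0) (0) (0) (1) (0) (0) (0) (mem_Ii k (0) (0) (0) _
      (by simp only [P2M, map_neg, map_pow, map_one, map_zero, Polynomial.aeval_X]; ring))
  · show Good k (X 1 * (X 1))
    exact good_cert (k := k) _ (0) (0) (0) (-Polynomial.X) (0) (0) (0) (0) (mem_Ii k (0) (1) (0) _
      (by simp only [P2M, map_neg, map_pow, map_one, map_zero, Polynomial.aeval_X]; ring))
  · show Good k (X 1 * (X 2))
    exact good_cert (k := k) _ (0) (0) (0) (0) (0) (0) (1) (0) (mem_Ii k (0) (0) (0) _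
      (by simp only [P2M, map_neg, map_pow, map_one, map_zero, Polynomial.aeval_X]; ring))
  · show Good k (X 1 * (X 0 * X 1))
    exact good_cert (k := k) _ (0) (0) (0) (0) (0) (-Polynomial.X) (0) (0) (mem_Ii k (0) (X 0) (0) _
      (by simp only [P2M, map_neg, map_pow, map_one, map_zero, Polynomial.aeval_X]; ring))
  · show Good k (X 1 * (X 0 * X 2))
    exact good_cert (k := k) _ (0) (0) (0) (0) (0) (0) (0) (1) (mem_Ii k (0) (0) (0) _
      (by simp only [P2M, map_neg, map_pow, map_one, map_zero, Polynomial.aeval_X]; ring))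
  · show Good k (X 1 * (X 1 * X 2))
    exact good_cert (k := k) _ (0) (Polynomial.X^2) (0) (0) (0) (0) (0) (0) (mem_Ii k (0) (X 2) (-X 3) _
      (by simp only [P2M, map_neg, map_pow, map_one, map_zero, Polynomial.aeval_X]; ring))
  · show Good k (X 1 * (X 0 * X 1 * X 2))
    exact good_cert (k := k) _ (0) (0) (-Polynomial.X^3) (0) (0) (0) (0) (0) (mem_Ii k (X 3 ^ 2) (X 0 * X 2) (-(X 0 * X 3)) _
      (by simp only [P2M, map_neg, map_pow, map_one, map_zero, Polynomial.aeval_X]; ring))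
  · show Good k (X 2 * (1))
    exact good_cert (k := k) _ (0) (0) (0) (1) (0) (0) (0) (0) (mem_Ii k (0) (0) (0) _
      (by simp only [P2M, map_neg, map_pow, map_one, map_zero, Polynomial.aeval_X]; ring))
  · show Good k (X 2 * (X 0))
    exact good_cert (k := k) _ (0) (0) (0) (0) (0) (1) (0) (0) (mem_Ii k (0) (0) (0) _
      (by simp only [P2M, map_neg, map_pow, map_one, map_zero, Polynomial.aeval_X]; ring))
  · show Good k (X 2 * (X 1))
    exact good_cert (k := k) _ (0) (0) (0) (0) (0) (0) (1) (0) (mem_Ii k (0) (0) (0) _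
      (by simp only [P2M, map_neg, map_pow, map_one, map_zero, Polynomial.aeval_X]; ring))
  · show Good k (X 2 * (X 2))
    exact good_cert (k := k) _ (0) (-Polynomial.X) (0) (0) (0) (0) (0) (0) (mem_Ii k (0) (0) (1) _
      (by simp only [P2M, map_neg, map_pow, map_one, map_zero, Polynomial.aeval_X]; ring))
  · show Good k (X 2 * (X 0 * X 1))
    exact good_cert (k := k) _ (0) (0) (0) (0) (0) (0) (0) (1) (mem_Ii k (0) (0) (0) _
      (by simp only [P2M, map_neg, map_pow, map_one, map_zero, Polynomial.aeval_X]; ring))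
  · show Good k (X 2 * (X 0 * X 2))
    exact good_cert (k := k) _ (0) (0) (Polynomial.X^2) (0) (0) (0) (0) (0) (mem_Ii k (-X 3) (0) (X 0) _
      (by simp only [P2M, map_neg, map_pow, map_one, map_zero, Polynomial.aeval_X]; ring))
  · show Good k (X 2 * (X 1 * X 2))
    exact good_cert (k := k) _ (0) (0) (0) (0) (-Polynomial.X) (0) (0) (0) (mem_Ii k (0) (0) (X 1) _
      (by simp only [P2M, map_neg, map_pow, map_one, map_zero, Polynomial.aeval_X]; ring))
  · show Good k (X 2 * (X 0 * X 1 * X 2))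
    exact good_cert (k := k) _ (0) (0) (0) (-Polynomial.X^3) (0) (0) (0) (0) (mem_Ii k (-(X 1 * X 3)) (X 3 ^ 2) (X 0 * X 1) _
      (by simp only [P2M, map_neg, map_pow, map_one, map_zero, Polynomial.aeval_X]; ring))
  · show Good k (X 3 * (1))
    exact good_cert (k := k) _ (Polynomial.X) (0) (0) (0) (0) (0) (0) (0) (mem_Ii k (0) (0) (0) _
      (by simp only [P2M, map_neg, map_pow, map_one, map_zero, Polynomial.aeval_X]; ring))
  · show Good k (X 3 * (X 0))
    exact good_cert (k := k) _ (0) (Polynomial.X) (0) (0) (0) (0) (0) (0) (mem_Ii k (0) (0) (0) _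
      (by simp only [P2M, map_neg, map_pow, map_one, map_zero, Polynomial.aeval_X]; ring))
  · show Good k (X 3 * (X 1))
    exact good_cert (k := k) _ (0) (0) (Polynomial.X) (0) (0) (0) (0) (0) (mem_Ii k (0) (0) (0) _
      (by simp only [P2M, map_neg, map_pow, map_one, map_zero, Polynomial.aeval_X]; ring))
  · show Good k (X 3 * (X 2))
    exact good_cert (k := k) _ (0) (0) (0) (Polynomial.X) (0) (0) (0) (0) (mem_Ii k (0) (0) (0) _
      (by simp only [P2M, map_neg, map_pow, map_one, map_zero, Polynomial.aeval_X]; ring))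
  · show Good k (X 3 * (X 0 * X 1))
    exact good_cert (k := k) _ (0) (0) (0) (0) (Polynomial.X) (0) (0) (0) (mem_Ii k (0) (0) (0) _
      (by simp only [P2M, map_neg, map_pow, map_one, map_zero, Polynomial.aeval_X]; ring))
  · show Good k (X 3 * (X 0 * X 2))
    exact good_cert (k := k) _ (0) (0) (0) (0) (0) (Polynomial.X) (0) (0) (mem_Ii k (0) (0) (0) _
      (by simp only [P2M, map_neg, map_pow, map_one, map_zero, Polynomial.aeval_X]; ring))
  · show Good k (X 3 * (X 1 * X 2))
    exact good_cert (k := k) _ (0) (0) (0) (0) (0) (0) (Polynomial.X) (0) (mem_Ii k (0) (0) (0) _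
      (by simp only [P2M, map_neg, map_pow, map_one, map_zero, Polynomial.aeval_X]; ring))
  · show Good k (X 3 * (X 0 * X 1 * X 2))
    exact good_cert (k := k) _ (0) (0) (0) (0) (0) (0) (0) (Polynomial.X) (mem_Ii k (0) (0) (0) _
      (by simp only [P2M, map_neg, map_pow, map_one, map_zero, Polynomial.aeval_X]; ring))

lemma good_Xmul (n : Fin 4) {f : R4 k} (hf : Good k f) : Good k (X n * f) := by
  obtain ⟨p, hp⟩ := hf
  have h2 : X n * NF k p = ∑ i, P2M k (p i) * (X n * b k i) := by
    rw [NF, Finset.mul_sum]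
    exact Finset.sum_congr rfl fun i _ => by ring
  have h1 : X n * f = X n * (f - NF k p) + ∑ i, P2M k (p i) * (X n * b k i) := by
    rw [← h2]; ring
  rw [h1]
  exact good_add (good_of_mem (Ideal.mul_mem_left _ _ hp))
    (good_sum _ _ fun i _ => good_smul (p i) (good_Xmul_b n i))

lemma good_all (f : R4 k) : Good k f := by
  induction f using MvPolynomial.induction_on with
  | C a =>
    refine good_cert (k := k) (C a) (Polynomial.C a) 0 0 0 0 0 0 0 ?_
    have h : (P2M k) (Polynomial.C a) * (1 : R4 k) = C a := by
      simp [P2M, algebraMap_eq]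
    simp only [map_zero, zero_mul, add_zero, h, sub_self]
    exact Ideal.zero_mem _
  | add p q hp hq => exact good_add hp hq
  | mul_X p n hp => simpa [mul_comm] using good_Xmul n hp


section Vec
variable {α : Type*}
lemma v8_0 (u0 u1 u2 u3 u4 u5 u6 u7 : α) : (![u0,u1,u2,u3,u4,u5,u6,u7] : Fin 8 → α) 0 = u0 := rfl
lemma v8_1 (u0 u1 u2 u3 u4 u5 u6 u7 : α) : (![u0,u1,u2,u3,u4,u5,u6,u7] : Fin 8 → α) 1 = u1 := rfl
lemma v8_2 (u0 u1 u2 u3 u4 u5 u6 u7 : α) : (![u0,u1,u2,u3,u4,u5,u6,u7] : Fin 8 → α) 2 = u2 := rfl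
lemma v8_3 (u0 u1 u2 u3 u4 u5 u6 u7 : α) : (![u0,u1,u2,u3,u4,u5,u6,u7] : Fin 8 → α) 3 = u3 := rfl
lemma v8_4 (u0 u1 u2 u3 u4 u5 u6 u7 : α) : (![u0,u1,u2,u3,u4,u5,u6,u7] : Fin 8 → α) 4 = u4 := rfl
lemma v8_5 (u0 u1 u2 u3 u4 u5 u6 u7 : α) : (![u0,u1,u2,u3,u4,u5,u6,u7] : Fin 8 → α) 5 = u5 := rfl
lemma v8_6 (u0 u1 u2 u3 u4 u5 u6 u7 : α) : (![u0,u1,u2,u3,u4,u5,u6,u7] : Fin 8 → α) 6 = u6 := rfl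
lemma v8_7 (u0 u1 u2 u3 u4 u5 u6 u7 : α) : (![u0,u1,u2,u3,u4,u5,u6,u7] : Fin 8 → α) 7 = u7 := rfl
lemma v4_0 (u0 u1 u2 u3 : α) : (![u0,u1,u2,u3] : Fin 4 → α) 0 = u0 := rfl
lemma v4_1 (u0 u1 u2 u3 : α) : (![u0,u1,u2,u3] : Fin 4 → α) 1 = u1 := rfl
lemma v4_2 (u0 u1 u2 u3 : α) : (![u0,u1,u2,u3] : Fin 4 → α) 2 = u2 := rfl
lemma v4_3 (u0 u1 u2 u3 : α) : (![u0,u1,u2,u3] : Fin 4 → α) 3 = u3 := rfl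
end Vec

section PartB

variable (k : Type) [Field k] (K : Type) [Field K] [Algebra k K]

def evA (a : K) : R4 k →ₐ[k] Polynomial K :=
  aeval ![Polynomial.C a * Polynomial.X, -(Polynomial.C a ^ 2 * Polynomial.X),
    -(Polynomial.C a ^ 4 * Polynomial.X), Polynomial.X]

lemma evA_mem (a : K) (ha : a ^ 8 + a = 0) {g : R4 k} (hg : g ∈ Ii k) :
    evA k K a g = 0 := by
  have hCa : (Polynomial.C a) ^ 8 + Polynomial.C a = (0 : Polynomial K) := by
    have := congrArg Polynomial.C ha
    simpa [map_add, map_pow] using this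
  have hker : Ii k ≤ RingHom.ker (evA k K a).toRingHom := by
    rw [Ii, Ideal.span_le]
    rintro g hg'
    simp only [Set.mem_insert_iff, Set.mem_singleton_iff] at hg'
    rcases hg' with rfl | rfl | rfl <;>
      simp only [SetLike.mem_coe, RingHom.mem_ker, AlgHom.toRingHom_eq_coe,
        RingHom.coe_coe, evA, map_add, map_mul, map_pow, aeval_X, v4_0, v4_1, v4_2, v4_3]
    · ring
    · ring
    · linear_combination Polynomial.X ^ 2 * hCa
  exact hker hg

lemma evA_X0 (a : K) : evA k K a (X 0) = Polynomial.C a * Polynomial.X := by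
  simp only [evA, aeval_X, v4_0]

lemma evA_X1 (a : K) : evA k K a (X 1) = -(Polynomial.C a ^ 2 * Polynomial.X) := by
  simp only [evA, aeval_X, v4_1]

lemma evA_X2 (a : K) : evA k K a (X 2) = -(Polynomial.C a ^ 4 * Polynomial.X) := by
  simp only [evA, aeval_X, v4_2]

lemma evA_P2M (a : K) (p : Polynomial k) :
    evA k K a (P2M k p) = Polynomial.map (algebraMap k K) p := by
  have h : (evA k K a).comp (P2M k) = Polynomial.mapAlgHom (Algebra.ofId k K) := by
    apply Polynomial.algHom_ext
    simp [evA, P2M, v4_3]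
  have h2 : evA k K a (P2M k p) = Polynomial.mapAlgHom (Algebra.ofId k K) p := by
    rw [← h]; rfl
  rw [h2]
  rfl

end PartB

lemma vdm {K : Type} [Field K] {n : ℕ} (a : Fin n → K) (ha : Function.Injective a)
    (u : Fin n → Polynomial K)
    (h : ∀ i, ∑ j : Fin n, Polynomial.C (a i ^ (j.1 : ℕ)) * u j = 0) : ∀ j, u j = 0 := by
  classical
  set M : Matrix (Fin n) (Fin n) (Polynomial K) :=
    fun i j => Polynomial.C (a i ^ (j.1 : ℕ)) with hMdef
  have hM : M.mulVec u = 0 := funext fun i => h i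
  have hdet : M.det ≠ 0 := by
    have hM2 : M = (Polynomial.C : K →+* Polynomial K).mapMatrix (Matrix.vandermonde a) := by
      ext i j; simp [hMdef, Matrix.vandermonde]
    rw [hM2, ← RingHom.map_det]
    simp only [ne_eq, Polynomial.C_eq_zero]
    rw [Matrix.det_vandermonde]
    refine Finset.prod_ne_zero_iff.2 fun i _ => Finset.prod_ne_zero_iff.2 fun j hj => ?_
    have : a j ≠ a i := fun hc => by
      have := ha hc
      rw [this] at hj
      exact absurd (Finset.mem_Ioi.1 hj) (lt_irrefl _)
    exact sub_ne_zero.2 this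
  intro j
  have h4 : M.adjugate.mulVec (M.mulVec u) = M.det • u := by
    rw [Matrix.mulVec_mulVec, Matrix.adjugate_mul, Matrix.smul_mulVec, Matrix.one_mulVec]
  rw [hM, Matrix.mulVec_zero] at h4
  have h5 : M.det * u j = 0 := by
    have := congrFun h4 j
    simpa [Pi.smul_apply, smul_eq_mul] using this.symm
  rcases mul_eq_zero.1 h5 with hc | hc
  · exact absurd hc hdet
  · exact hc

end Stmt0Aux

private lemma fv0 : ((0:Fin 8):ℕ) = 0 := rfl
private lemma fv1 : ((1:Fin 8):ℕ) = 1 := rfl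
private lemma fv2 : ((2:Fin 8):ℕ) = 2 := rfl
private lemma fv3 : ((3:Fin 8):ℕ) = 3 := rfl
private lemma fv4 : ((4:Fin 8):ℕ) = 4 := rfl
private lemma fv5 : ((5:Fin 8):ℕ) = 5 := rfl
private lemma fv6 : ((6:Fin 8):ℕ) = 6 := rfl
private lemma fv7 : ((7:Fin 8):ℕ) = 7 := rfl

theorem stmt_0 (k : Type) [Field k] [CharZero k] :
    (Ideal.span {(X 0 : MvPolynomial (Fin 4) k) ^ 2 + X 1 * X 3,
        (X 1 : MvPolynomial (Fin 4) k) ^ 2 + X 2 * X 3,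
        (X 2 : MvPolynomial (Fin 4) k) ^ 2 + X 0 * X 3}).IsRadical := by
  have hIi : Ideal.span {(X 0 : MvPolynomial (Fin 4) k) ^ 2 + X 1 * X 3,
      (X 1 : MvPolynomial (Fin 4) k) ^ 2 + X 2 * X 3,
      (X 2 : MvPolynomial (Fin 4) k) ^ 2 + X 0 * X 3} = Stmt0Aux.Ii k := rfl
  rw [hIi, Ideal.isRadical_iff_pow_one_lt 2 one_lt_two]
  intro f hf2
  obtain ⟨p, hp⟩ := Stmt0Aux.good_all f
  let K : Type := CyclotomicField 7 k
  have hζspec := IsCyclotomicExtension.zeta_spec 7 k K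
  set ζ : K := IsCyclotomicExtension.zeta 7 k K with hζdef
  have hζ : IsPrimitiveRoot ζ 7 := by simpa using hζspec
  have hz7 : ζ ^ 7 = 1 := hζ.pow_eq_one
  have hzne : ζ ≠ 0 := hζ.ne_zero (by norm_num)
  set aa : Fin 8 → K := fun i => if i = 0 then 0 else -ζ ^ ((i.1 : ℕ) - 1) with haadef
  have haa8 : ∀ i, aa i ^ 8 + aa i = 0 := by
    intro i
    by_cases h : i = 0
    · simp [haadef, h]
    · simp only [haadef, if_neg h]
      have hr : (-ζ ^ (i.1 - 1)) ^ 8 + -ζ ^ (i.1 - 1)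
          = (ζ ^ 7) ^ (i.1 - 1) * ζ ^ (i.1 - 1) - ζ ^ (i.1 - 1) := by ring
      rw [hr, hz7, one_pow, one_mul, sub_self]
  have hainj : Function.Injective aa := by
    intro i j hij
    by_cases hi : i = 0 <;> by_cases hj : j = 0
    · rw [hi, hj]
    · exfalso
      rw [hi] at hij
      simp only [haadef, if_pos rfl, if_neg hj] at hij
      exact pow_ne_zero _ hzne (neg_eq_zero.1 hij.symm)
    · exfalso
      rw [hj] at hij
      simp only [haadef, if_pos rfl, if_neg hi] at hij
      exact pow_ne_zero _ hzne (neg_eq_zero.1 hij)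
    · simp only [haadef, if_neg hi, if_neg hj, neg_inj] at hij
      have hi1 : i.1 ≠ 0 := fun hc => hi (Fin.ext hc)
      have hj1 : j.1 ≠ 0 := fun hc => hj (Fin.ext hc)
      have h3 := hζ.pow_inj (show i.1 - 1 < 7 by omega) (show j.1 - 1 < 7 by omega) (neg_inj.1 hij)
      exact Fin.ext (by omega)
  have hev0 : ∀ i, Stmt0Aux.evA k K (aa i) f = 0 := by
    intro i
    have h2 : (Stmt0Aux.evA k K (aa i) f) ^ 2 = 0 := by
      rw [← map_pow]
      exact Stmt0Aux.evA_mem k K (aa i) (haa8 i) hf2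
    exact (pow_eq_zero_iff two_ne_zero).1 h2
  have hNF0 : ∀ i, Stmt0Aux.evA k K (aa i) (Stmt0Aux.NF k p) = 0 := by
    intro i
    have hsub : Stmt0Aux.evA k K (aa i) (f - Stmt0Aux.NF k p) = 0 :=
      Stmt0Aux.evA_mem k K (aa i) (haa8 i) hp
    have hc : Stmt0Aux.evA k K (aa i) (Stmt0Aux.NF k p)
        = Stmt0Aux.evA k K (aa i) f - Stmt0Aux.evA k K (aa i) (f - Stmt0Aux.NF k p) := by
      rw [map_sub]; ring
    rw [hc, hev0 i, hsub, sub_zero]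
  set m : Fin 8 → Polynomial K := fun i => Polynomial.map (algebraMap k K) (p i) with hmdef
  set u : Fin 8 → Polynomial K := ![m 0, Polynomial.X * m 1, -(Polynomial.X * m 2),
    -(Polynomial.X ^ 2 * m 4), -(Polynomial.X * m 3), -(Polynomial.X ^ 2 * m 5),
    Polynomial.X ^ 2 * m 6, Polynomial.X ^ 3 * m 7] with hudef
  have hu : ∀ i, ∑ j : Fin 8, Polynomial.C (aa i ^ (j.1 : ℕ)) * u j = 0 := by
    intro i
    have hexp : Stmt0Aux.evA k K (aa i) (Stmt0Aux.NF k p)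
        = ∑ j : Fin 8, Polynomial.C (aa i ^ (j.1 : ℕ)) * u j := by
      rw [Stmt0Aux.NF, map_sum]
      simp only [map_mul, Stmt0Aux.evA_P2M]
      simp only [Fin.sum_univ_eight, hudef, hmdef, Stmt0Aux.b,
        Stmt0Aux.v8_0, Stmt0Aux.v8_1, Stmt0Aux.v8_2, Stmt0Aux.v8_3,
        Stmt0Aux.v8_4, Stmt0Aux.v8_5, Stmt0Aux.v8_6, Stmt0Aux.v8_7,
        map_mul, map_one, Stmt0Aux.evA_X0, Stmt0Aux.evA_X1, Stmt0Aux.evA_X2]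
      simp only [fv0, fv1, fv2, fv3, fv4, fv5, fv6, fv7, pow_zero, pow_one, map_one, map_pow]
      ring
    rw [← hexp]
    exact hNF0 i
  have hu0 := Stmt0Aux.vdm aa hainj u hu
  have hmap_inj : Function.Injective
      (Polynomial.map (algebraMap k K) : Polynomial k → Polynomial K) :=
    Polynomial.map_injective _ (algebraMap k K).injective
  have hXne : (Polynomial.X : Polynomial K) ≠ 0 := Polynomial.X_ne_zero
  have hm0 : m 0 = 0 := hu0 0
  have hm1 : m 1 = 0 := by
    have h := hu0 1
    rcases mul_eq_zero.1 (show Polynomial.X * m 1 = 0 from h) with hc | hc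
    · exact absurd hc hXne
    · exact hc
  have hm2 : m 2 = 0 := by
    have h := hu0 2
    rcases mul_eq_zero.1 (neg_eq_zero.1 (show -(Polynomial.X * m 2) = 0 from h)) with hc | hc
    · exact absurd hc hXne
    · exact hc
  have hm4 : m 4 = 0 := by
    have h := hu0 3
    rcases mul_eq_zero.1 (neg_eq_zero.1 (show -(Polynomial.X ^ 2 * m 4) = 0 from h)) with hc | hc
    · exact absurd hc (pow_ne_zero _ hXne)
    · exact hc
  have hm3 : m 3 = 0 := by
    have h := hu0 4
    rcases mul_eq_zero.1 (neg_eq_zero.1 (show -(Polynomial.X * m 3) = 0 from h)) with hc | hc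
    · exact absurd hc hXne
    · exact hc
  have hm5 : m 5 = 0 := by
    have h := hu0 5
    rcases mul_eq_zero.1 (neg_eq_zero.1 (show -(Polynomial.X ^ 2 * m 5) = 0 from h)) with hc | hc
    · exact absurd hc (pow_ne_zero _ hXne)
    · exact hc
  have hm6 : m 6 = 0 := by
    have h := hu0 6
    rcases mul_eq_zero.1 (show Polynomial.X ^ 2 * m 6 = 0 from h) with hc | hc
    · exact absurd hc (pow_ne_zero _ hXne)
    · exact hc
  have hm7 : m 7 = 0 := by
    have h := hu0 7
    rcases mul_eq_zero.1 (show Polynomial.X ^ 3 * m 7 = 0 from h) with hc | hc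
    · exact absurd hc (pow_ne_zero _ hXne)
    · exact hc
  have hpz : ∀ i : Fin 8, p i = 0 := by
    intro i
    have key : ∀ j : Fin 8, m j = 0 → p j = 0 := fun j hj => hmap_inj (by simpa [hmdef] using hj)
    fin_cases i
    · exact key 0 hm0
    · exact key 1 hm1
    · exact key 2 hm2
    · exact key 3 hm3
    · exact key 4 hm4
    · exact key 5 hm5
    · exact key 6 hm6
    · exact key 7 hm7
  have hNFz : Stmt0Aux.NF k p = 0 := by
    rw [show p = 0 from funext hpz]
    simp [Stmt0Aux.NF]
  rwa [hNFz, sub_zero] at hp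

end
end

section
/- In the polynomial ring k[x,y,z,w] over a field k of characteristic zero, the ideal I₂ = (x² + yw, y² + zw, z² + xw) has height 3, i.e., it is a complete intersection of three quadrics. -/
open MvPolynomial

noncomputable section

/-- The height of an ideal: the infimum of heights of primes containing it. -/
def idealHeight {R : Type*} [CommRing R] (I : Ideal R) : ℕ∞ :=
  ⨅ P ∈ {P : PrimeSpectrum R | I ≤ P.asIdeal}, Order.height P

namespace CIaux


variable {k : Type} [Field k]

/-- box finsupp with all coords = M -/
def boxTop (m M : ℕ) : Fin m →₀ ℕ := Finsupp.equivFunOnFinite.symm (fun _ => M)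

lemma boxTop_apply (m M : ℕ) (i : Fin m) : boxTop m M i = M := rfl

lemma card_box (m M : ℕ) (hM : M ≠ 0) :
    (Finset.Iic (boxTop m M)).card = (M+1)^m := by
  rw [Finsupp.card_Iic]
  have hsupp : (boxTop m M).support = Finset.univ := by
    ext i; simp [Finsupp.mem_support_iff, boxTop_apply, hM]
  rw [hsupp]
  simp only [boxTop_apply, Nat.card_Iic]
  rw [Finset.prod_const, Finset.card_univ, Fintype.card_fin]

lemma mem_box_iff {m M : ℕ} (d : Fin m →₀ ℕ) :
    d ∈ Finset.Iic (boxTop m M) ↔ ∀ i, d i ≤ M := by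
  rw [Finset.mem_Iic, Finsupp.le_iff]
  constructor
  · intro h i
    by_cases hi : d i = 0
    · simp [hi]
    · exact le_trans (h i (Finsupp.mem_support_iff.2 hi)) (le_of_eq (boxTop_apply m M i))
  · intro h i _
    exact le_trans (h i) (le_of_eq (boxTop_apply m M i).symm)

lemma span_monomials {m M : ℕ} [DecidableEq (MvPolynomial (Fin m) k)] (f : MvPolynomial (Fin m) k)
    (hf : f.totalDegree ≤ M) :
    f ∈ Submodule.span k (((Finset.Iic (boxTop m M)).image
      (fun d => (monomial d (1:k)))) : Set (MvPolynomial (Fin m) k)) := by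
  rw [← MvPolynomial.support_sum_monomial_coeff f]
  refine Submodule.sum_mem _ (fun e he => ?_)
  have hmem : e ∈ Finset.Iic (boxTop m M) := by
    rw [mem_box_iff]
    intro i
    by_cases hi : e i = 0
    · omega
    · calc e i ≤ e.sum (fun _ n => n) := by
            refine Finset.single_le_sum (f := fun j => e j) (fun _ _ => Nat.zero_le _) ?_
            exact Finsupp.mem_support_iff.2 hi
        _ ≤ f.totalDegree := MvPolynomial.le_totalDegree he
        _ ≤ M := hf
  have : monomial e (coeff e f) = (coeff e f) • monomial e (1:k) := by
    rw [MvPolynomial.smul_monomial, smul_eq_mul, mul_one]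
  rw [this]
  exact Submodule.smul_mem _ _ (Submodule.subset_span (by
    simp only [Finset.coe_image, Set.mem_image, Finset.mem_coe]
    exact ⟨e, hmem, rfl⟩))

theorem no_five_indep (v : Fin 5 → MvPolynomial (Fin 4) k) :
    ¬ AlgebraicIndependent k v := by
  classical
  intro hv
  set D : ℕ := (Finset.univ.sup fun i => (v i).totalDegree) + 1 with hD
  have hDpos : 1 ≤ D := Nat.le_add_left 1 _
  have hvD : ∀ i, (v i).totalDegree ≤ D := by
    intro i
    exact Nat.le_succ_of_le (Finset.le_sup (f := fun i => (v i).totalDegree) (Finset.mem_univ i))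
  set N : ℕ := (5*D+1)^4 with hN
  have hNpos : 1 ≤ N := Nat.one_le_pow _ _ (by omega)
  set M : ℕ := 5*N*D with hM
  have hMpos : 1 ≤ M := by
    have : 5*1*1 ≤ 5*N*D := by
      exact Nat.mul_le_mul (Nat.mul_le_mul (le_refl 5) hNpos) hDpos
    omega
  set Φ := (aeval v : MvPolynomial (Fin 5) k →ₐ[k] MvPolynomial (Fin 4) k) with hΦ
  have hΦinj : Function.Injective Φ := algebraicIndependent_iff_injective_aeval.mp hv
  -- degree bound on images of box monomials
  have hdeg : ∀ d ∈ Finset.Iic (boxTop 5 N), (Φ (monomial d 1)).totalDegree ≤ M := by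
    intro d hd
    rw [hΦ, aeval_monomial, map_one, one_mul]
    show (d.prod fun i n => v i ^ n).totalDegree ≤ M
    rw [Finsupp.prod]
    calc (∏ i ∈ d.support, v i ^ d i).totalDegree
        ≤ ∑ i ∈ d.support, (v i ^ d i).totalDegree :=
          MvPolynomial.totalDegree_finset_prod _ _
      _ ≤ ∑ i ∈ d.support, N * D := by
          refine Finset.sum_le_sum (fun i _ => ?_)
          calc (v i ^ d i).totalDegree ≤ d i * (v i).totalDegree :=
                MvPolynomial.totalDegree_pow _ _
            _ ≤ N * D := Nat.mul_le_mul ((mem_box_iff d).1 hd i) (hvD i)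
      _ ≤ ∑ _i ∈ (Finset.univ : Finset (Fin 5)), N * D :=
          Finset.sum_le_sum_of_subset (Finset.subset_univ _)
      _ = 5 * N * D := by simp [Finset.sum_const, mul_assoc]
  -- the target space
  set T : Finset (MvPolynomial (Fin 4) k) := (Finset.Iic (boxTop 4 M)).image (fun d => (monomial d (1:k))) with hT
  have hTcard : T.card ≤ (M+1)^4 := le_trans (Finset.card_image_le) (le_of_eq (card_box 4 M (by omega)))
  set W := Submodule.span k (T : Set (MvPolynomial (Fin 4) k)) with hW
  haveI : FiniteDimensional k W := FiniteDimensional.span_of_finite k T.finite_toSet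
  -- linear independent family inside W
  have hmemW : ∀ d : ↑(Finset.Iic (boxTop 5 N)), Φ (monomial (d:Fin 5 →₀ ℕ) 1) ∈ W := by
    intro d
    exact span_monomials _ (hdeg d d.2)
  set b : ↑(Finset.Iic (boxTop 5 N)) → W := fun d => ⟨Φ (monomial (d:Fin 5 →₀ ℕ) 1), hmemW d⟩ with hb
  have hli0 : LinearIndependent k (fun d : Fin 5 →₀ ℕ => Φ (monomial d 1)) := by
    have h1 : LinearIndependent k (fun d : Fin 5 →₀ ℕ => (monomial d (1:k))) := by
      have := (MvPolynomial.basisMonomials (Fin 5) k).linearIndependent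
      rwa [MvPolynomial.coe_basisMonomials] at this
    exact h1.map' Φ.toLinearMap (LinearMap.ker_eq_bot.mpr hΦinj)
  have hli : LinearIndependent k b := by
    have h2 := hli0.comp ((↑) : ↑(Finset.Iic (boxTop 5 N)) → (Fin 5 →₀ ℕ)) Subtype.val_injective
    refine LinearIndependent.of_comp W.subtype ?_
    exact h2
  have hcard := hli.fintype_card_le_finrank
  rw [Fintype.card_coe, card_box 5 N (by omega)] at hcard
  have hrank : Module.finrank k W ≤ T.card := finrank_span_finset_le_card T
  have hfinal : (N+1)^5 ≤ (M+1)^4 := le_trans hcard (le_trans hrank hTcard)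
  -- arithmetic contradiction
  have h1 : M + 1 ≤ N * (5*D+1) := by
    have h5 : N*(5*D+1) = 5*N*D + N := by ring
    omega
  have h2 : (M+1)^4 ≤ (N*(5*D+1))^4 := Nat.pow_le_pow_left h1 4
  have h3 : (N*(5*D+1))^4 = N^4 * N := by
    rw [mul_pow, hN]
  have h4 : N^4 * N < (N+1)^5 := by
    have : N^4 * N = N^5 := by ring
    rw [this]
    exact Nat.pow_lt_pow_left (Nat.lt_succ_self N) (by omega)
  omega




lemma aeval_cons_eq {n : ℕ} {A : Type} [CommRing A] [Algebra k A] (a : A) (s : Fin n → A)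
    (P : MvPolynomial (Fin (n+1)) k) :
    aeval (Fin.cons a s) P =
      Polynomial.eval a (Polynomial.map (↑(aeval s : MvPolynomial (Fin n) k →ₐ[k] A) :
        MvPolynomial (Fin n) k →+* A) (finSuccEquiv k n P)) := by
  induction P using MvPolynomial.induction_on with
  | C c => simp [finSuccEquiv_apply]
  | add p q hp hq => simp [map_add, hp, hq]
  | mul_X p i hp =>
      rw [map_mul, map_mul, Polynomial.map_mul, Polynomial.eval_mul, ← hp]
      congr 1
      refine Fin.cases ?_ ?_ i
      · simp [finSuccEquiv_X_zero]
      · intro j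
        simp [finSuccEquiv_X_succ]

variable (k) in
lemma indep_extend {n : ℕ} {R : Type} [CommRing R] [Algebra k R]
    (p q : Ideal R) [hp : p.IsPrime] [hq : q.IsPrime] (hpq : p ≤ q)
    (f : R) (hfq : f ∈ q) (hfp : f ∉ p) (v : Fin n → R)
    (hv : AlgebraicIndependent k (fun i => Ideal.Quotient.mk q (v i))) :
    AlgebraicIndependent k (fun i => Ideal.Quotient.mk p ((Fin.cons f v : Fin (n+1) → R) i)) := by
  haveI : IsDomain (R ⧸ p) := Ideal.Quotient.isDomain p
  set α := (aeval (fun i => Ideal.Quotient.mk p (v i)) :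
    MvPolynomial (Fin n) k →ₐ[k] R ⧸ p) with hα
  set β := (aeval (fun i => Ideal.Quotient.mk q (v i)) :
    MvPolynomial (Fin n) k →ₐ[k] R ⧸ q) with hβ
  have hβinj : Function.Injective β := algebraicIndependent_iff_injective_aeval.mp hv
  set π := Ideal.Quotient.factor hpq with hπ
  have hcomp : π.comp (α : MvPolynomial (Fin n) k →+* R ⧸ p) =
      (β : MvPolynomial (Fin n) k →+* R ⧸ q) := by
    apply MvPolynomial.ringHom_ext
    · intro c
      show π (α (C c)) = β (C c)
      rw [hα, hβ, aeval_C, aeval_C,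
        IsScalarTower.algebraMap_apply k R (R ⧸ p), IsScalarTower.algebraMap_apply k R (R ⧸ q),
        Ideal.Quotient.algebraMap_eq, Ideal.Quotient.algebraMap_eq, hπ,
        Ideal.Quotient.factor_mk]
    · intro i
      show π (α (X i)) = β (X i)
      rw [hα, hβ, aeval_X, aeval_X, hπ, Ideal.Quotient.factor_mk]
  have hπβ : ∀ F, π (α F) = β F := fun F => RingHom.congr_fun hcomp F
  rw [algebraicIndependent_iff]
  intro P hP
  -- rewrite evaluation
  have hfun : (fun i => Ideal.Quotient.mk p ((Fin.cons f v : Fin (n+1) → R) i)) =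
      Fin.cons (Ideal.Quotient.mk p f) (fun i => Ideal.Quotient.mk p (v i)) := by
    funext i
    refine Fin.cases ?_ ?_ i <;> simp
  rw [hfun, aeval_cons_eq] at hP
  set fp := Ideal.Quotient.mk p f with hfp'
  have hfpne : fp ≠ 0 := by
    rw [hfp', Ne, Ideal.Quotient.eq_zero_iff_mem]; exact hfp
  -- key induction
  have key : ∀ (m : ℕ) (Q : Polynomial (MvPolynomial (Fin n) k)), Q.natDegree ≤ m →
      Polynomial.eval fp (Q.map (α : MvPolynomial (Fin n) k →+* R ⧸ p)) = 0 → Q = 0 := by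
    intro m
    induction m with
    | zero =>
        intro Q hdeg heval
        have hQC : Q = Polynomial.C (Q.coeff 0) := Polynomial.eq_C_of_natDegree_le_zero hdeg
        rw [hQC, Polynomial.map_C, Polynomial.eval_C] at heval
        have hb0 : β (Q.coeff 0) = 0 := by
          calc β (Q.coeff 0) = π (α (Q.coeff 0)) := (hπβ _).symm
            _ = π 0 := congrArg π heval
            _ = 0 := map_zero π
        have hz : Q.coeff 0 = 0 := hβinj (by rw [map_zero]; exact hb0)
        rw [hQC, hz, map_zero]
    | succ m ih =>
        intro Q hdeg heval
        have hc0 : Q.coeff 0 = 0 := by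
          have h1 : π (Polynomial.eval fp (Q.map (α : MvPolynomial (Fin n) k →+* R ⧸ p))) = 0 := by
            rw [heval, map_zero]
          rw [← Polynomial.eval₂_at_apply, Polynomial.eval₂_map, hcomp] at h1
          have h2 : π fp = 0 := by
            rw [hfp', hπ, Ideal.Quotient.factor_mk, Ideal.Quotient.eq_zero_iff_mem]; exact hfq
          rw [h2] at h1
          rw [Polynomial.eval₂_at_zero] at h1
          exact hβinj (by rw [map_zero]; exact h1)
        have hQ : Q.divX * Polynomial.X = Q := by
          have := Polynomial.divX_mul_X_add Q
          rw [hc0, map_zero, add_zero] at this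
          exact this
        have heval2 : Polynomial.eval fp (Q.divX.map (α : MvPolynomial (Fin n) k →+* R ⧸ p)) * fp = 0 := by
          have hmap : Polynomial.map (α : MvPolynomial (Fin n) k →+* R ⧸ p) Q =
              Polynomial.map (α : MvPolynomial (Fin n) k →+* R ⧸ p) Q.divX * Polynomial.X := by
            conv_lhs => rw [← hQ]
            rw [Polynomial.map_mul, Polynomial.map_X]
          rw [hmap, Polynomial.eval_mul, Polynomial.eval_X] at heval
          exact heval
        have h3 : Polynomial.eval fp (Q.divX.map (α : MvPolynomial (Fin n) k →+* R ⧸ p)) = 0 := by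
          rcases mul_eq_zero.mp heval2 with h | h
          · exact h
          · exact absurd h hfpne
        have hdeg2 : Q.divX.natDegree ≤ m := by
          have := Polynomial.natDegree_divX_eq_natDegree_tsub_one (p := Q)
          omega
        have := ih Q.divX hdeg2 h3
        rw [← hQ, this, zero_mul]
  have hQ0 : finSuccEquiv k n P = 0 :=
    key (finSuccEquiv k n P).natDegree _ le_rfl hP
  have := (finSuccEquiv k n).injective (by rw [hQ0, map_zero] : finSuccEquiv k n P = finSuccEquiv k n 0)
  exact this




local notation "R" => MvPolynomial (Fin 4) k
local notation "S2" => MvPolynomial (Fin 2) k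

def f0 : MvPolynomial (Fin 4) k := X 0 ^ 2 + X 1 * X 3
def f1 : MvPolynomial (Fin 4) k := X 1 ^ 2 + X 2 * X 3
def f2 : MvPolynomial (Fin 4) k := X 2 ^ 2 + X 0 * X 3

def Igen : Ideal R := Ideal.span {f0, f1, f2}

lemma f0_mem : (f0 : R) ∈ Igen := Ideal.subset_span (by simp)
lemma f1_mem : (f1 : R) ∈ Igen := Ideal.subset_span (by simp)
lemma f2_mem : (f2 : R) ∈ Igen := Ideal.subset_span (by simp)

-- the three "coordinate" kernels
def e1 : MvPolynomial (Fin 4) k →ₐ[k] MvPolynomial (Fin 4) k := aeval ![0, X 1, X 2, X 3]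
def e2 : MvPolynomial (Fin 4) k →ₐ[k] MvPolynomial (Fin 4) k := aeval ![0, 0, X 2, X 3]
def e3 : MvPolynomial (Fin 4) k →ₐ[k] MvPolynomial (Fin 4) k := aeval ![0, 0, 0, X 3]

def K1 : Ideal R := RingHom.ker (e1 (k := k)).toRingHom
def K2 : Ideal R := RingHom.ker (e2 (k := k)).toRingHom
def K3 : Ideal R := RingHom.ker (e3 (k := k)).toRingHom

instance K1_prime : (K1 (k := k)).IsPrime := RingHom.ker_isPrime _
instance K2_prime : (K2 (k := k)).IsPrime := RingHom.ker_isPrime _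
instance K3_prime : (K3 (k := k)).IsPrime := RingHom.ker_isPrime _

lemma e2_comp_e1 : (e2 (k := k)).comp e1 = e2 := by
  apply MvPolynomial.algHom_ext
  intro i
  fin_cases i <;> simp [e1, e2]

lemma e3_comp_e2 : (e3 (k := k)).comp e2 = e3 := by
  apply MvPolynomial.algHom_ext
  intro i
  fin_cases i <;> simp [e2, e3]

lemma K1_le_K2 : (K1 (k := k)) ≤ K2 := by
  intro f hf
  have hf' : e1 f = 0 := hf
  show e2 f = 0
  rw [← e2_comp_e1]
  show e2 (e1 f) = 0
  rw [hf', map_zero]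

lemma K2_le_K3 : (K2 (k := k)) ≤ K3 := by
  intro f hf
  have hf' : e2 f = 0 := hf
  show e3 f = 0
  rw [← e3_comp_e2]
  show e3 (e2 f) = 0
  rw [hf', map_zero]

lemma X0_mem_K1 : (X 0 : R) ∈ K1 := by
  show e1 (X 0) = 0
  simp [e1]

lemma X1_mem_K2 : (X 1 : R) ∈ K2 := by
  show e2 (X 1) = 0
  simp [e2]

lemma X1_not_mem_K1 : (X 1 : R) ∉ K1 := by
  show ¬ e1 (X 1) = 0
  simp [e1, MvPolynomial.X_ne_zero]

lemma X2_mem_K3 : (X 2 : R) ∈ K3 := by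
  show e3 (X 2) = 0
  simp [e3]

lemma X2_not_mem_K2 : (X 2 : R) ∉ K2 := by
  show ¬ e2 (X 2) = 0
  simp [e2, MvPolynomial.X_ne_zero]

lemma X3_not_mem_K3 : (X 3 : R) ∉ K3 := by
  show ¬ e3 (X 3) = 0
  simp [e3, MvPolynomial.X_ne_zero]

lemma sub_e3_mem (f : R) : f - e3 f ∈ Ideal.span {(X 0 : R), X 1, X 2} := by
  induction f using MvPolynomial.induction_on with
  | C a => simp [e3, Submodule.zero_mem]
  | add p q hp hq =>
      rw [map_add]
      have := Ideal.add_mem _ hp hq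
      convert this using 1
      ring
  | mul_X p i hp =>
      rw [map_mul]
      fin_cases i
      · show p * X 0 - e3 p * e3 (X 0) ∈ _
        rw [show e3 (X 0 : R) = 0 by simp [e3], mul_zero, sub_zero]
        exact Ideal.mul_mem_left _ _ (Ideal.subset_span (by simp))
      · show p * X 1 - e3 p * e3 (X 1) ∈ _
        rw [show e3 (X 1 : R) = 0 by simp [e3], mul_zero, sub_zero]
        exact Ideal.mul_mem_left _ _ (Ideal.subset_span (by simp))
      · show p * X 2 - e3 p * e3 (X 2) ∈ _
        rw [show e3 (X 2 : R) = 0 by simp [e3], mul_zero, sub_zero]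
        exact Ideal.mul_mem_left _ _ (Ideal.subset_span (by simp))
      · show p * X 3 - e3 p * e3 (X 3) ∈ _
        rw [show e3 (X 3 : R) = (X 3 : R) by simp [e3]]
        have := Ideal.mul_mem_right (X 3 : R) _ hp
        convert this using 1
        ring

lemma K3_le_of_vars {P : Ideal R} (h0 : (X 0:R) ∈ P) (h1 : (X 1:R) ∈ P) (h2 : (X 2:R) ∈ P) :
    (K3 (k := k)) ≤ P := by
  intro f hf
  have hf' : e3 f = 0 := hf
  have := sub_e3_mem f
  rw [hf', sub_zero] at this
  refine Ideal.span_le.mpr ?_ this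
  intro x hx
  simp only [Set.mem_insert_iff, Set.mem_singleton_iff] at hx
  rcases hx with rfl | rfl | rfl <;> assumption

-- upper bound witness
def φs : MvPolynomial (Fin 4) k →+* Polynomial k :=
  eval₂Hom Polynomial.C ![-Polynomial.X, -Polynomial.X, -Polynomial.X, Polynomial.X]

def φ0 : MvPolynomial (Fin 4) k →+* k := eval₂Hom (RingHom.id k) (fun _ => 0)

def Pstar : Ideal R := RingHom.ker (φs (k := k))
def Mstar : Ideal R := RingHom.ker (φ0 (k := k))

instance Pstar_prime : (Pstar (k := k)).IsPrime := RingHom.ker_isPrime _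
instance Mstar_prime : (Mstar (k := k)).IsPrime := RingHom.ker_isPrime _

lemma Igen_le_Pstar : (Igen (k := k)) ≤ Pstar := by
  rw [Igen, Ideal.span_le]
  intro x hx
  simp only [Set.mem_insert_iff, Set.mem_singleton_iff] at hx
  rcases hx with rfl | rfl | rfl <;>
  · show φs _ = 0
    simp [f0, f1, f2, φs]
    ring

lemma Pstar_le_Mstar : (Pstar (k := k)) ≤ Mstar := by
  have hcomp : (Polynomial.evalRingHom (0:k)).comp (φs (k := k)) = φ0 := by
    apply MvPolynomial.ringHom_ext
    · intro c
      simp [φs, φ0]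
    · intro i
      fin_cases i <;> simp [φs, φ0]
  intro f hf
  have hf' : φs f = 0 := hf
  show φ0 f = 0
  rw [← hcomp]
  show Polynomial.evalRingHom (0:k) (φs f) = 0
  rw [hf', map_zero]

lemma Pstar_lt_Mstar : (Pstar (k := k)) < Mstar := by
  refine lt_of_le_of_ne Pstar_le_Mstar (fun h => ?_)
  have h1 : (X 0 : R) ∈ Mstar := by
    show φ0 (X 0) = 0
    simp [φ0]
  rw [← h] at h1
  have h2 : φs (X 0 : R) = -Polynomial.X := by simp [φs]
  have h3 : φs (X 0 : R) = 0 := h1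
  rw [h2, neg_eq_zero] at h3
  exact (Polynomial.X_ne_zero : (Polynomial.X : Polynomial k) ≠ 0) h3

/-! ### Case 3 machinery -/

def jmap : Fin 2 → Fin 4 := ![0, 3]

def emb : MvPolynomial (Fin 2) k →ₐ[k] MvPolynomial (Fin 4) k := rename jmap

lemma emb_X0 : (emb (X 0) : R) = X 0 := by simp [emb, jmap, rename_X]
lemma emb_X1 : (emb (X 1) : R) = X 3 := by simp [emb, jmap, rename_X]
lemma emb_C (c : k) : (emb (C c) : R) = C c := by simp [emb, rename_C]

def esum : (Fin 2 ⊕ Fin 2) ≃ Fin 4 where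
  toFun := Sum.elim ![1, 2] ![0, 3]
  invFun := ![Sum.inr 0, Sum.inl 0, Sum.inl 1, Sum.inr 1]
  left_inv := by rintro (i | i) <;> fin_cases i <;> rfl
  right_inv := by intro i; fin_cases i <;> rfl

lemma emb_eq_equiv (G : S2) :
    (emb G : R) = renameEquiv k esum ((sumAlgEquiv k (Fin 2) (Fin 2)).symm (C G)) := by
  have hhom : (emb (k := k)).toRingHom =
      ((renameEquiv k esum).toAlgHom.comp
        ((sumAlgEquiv k (Fin 2) (Fin 2)).symm.toAlgHom)).toRingHom.comp
          (C : S2 →+* MvPolynomial (Fin 2) S2) := by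
    apply MvPolynomial.ringHom_ext
    · intro c
      simp [emb, rename_C, sumAlgEquiv_symm_C_C, iterToSum_C_C]
    · intro i
      fin_cases i <;>
        simp [emb, jmap, rename_X, sumAlgEquiv_symm_C_X, iterToSum_C_X, esum]
  exact RingHom.congr_fun hhom G

lemma prime_emb {G : S2} (hG : Prime G) : Prime (emb G : R) := by
  rw [emb_eq_equiv]
  have h1 : Prime (C G : MvPolynomial (Fin 2) S2) := (MvPolynomial.prime_C_iff (Fin 2)).mpr hG
  have h2 := (MulEquiv.prime_iff (sumAlgEquiv k (Fin 2) (Fin 2)).symm).mpr h1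
  exact (MulEquiv.prime_iff (renameEquiv k esum)).mpr h2

/-- reduction: powers of X 3 push everything into the image of emb modulo Igen -/
lemma reduce (f : R) :
    ∃ (n : ℕ) (F : S2), (X 3 : R) ^ n * f - emb F ∈ (Igen (k := k)) := by
  induction f using MvPolynomial.induction_on with
  | C c =>
      refine ⟨0, C c, ?_⟩
      rw [emb_C]
      simp [Submodule.zero_mem]
  | add p q hp hq =>
      obtain ⟨n1, F1, h1⟩ := hp
      obtain ⟨n2, F2, h2⟩ := hq
      refine ⟨n1 + n2, (X 1) ^ n2 * F1 + (X 1) ^ n1 * F2, ?_⟩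
      have hm := Ideal.add_mem _ (Ideal.mul_mem_left _ ((X 3 : R) ^ n2) h1)
        (Ideal.mul_mem_left _ ((X 3 : R) ^ n1) h2)
      convert hm using 1
      rw [map_add, map_mul, map_mul, map_pow, map_pow, emb_X1]
      ring
  | mul_X p i hp =>
      obtain ⟨n, F, h⟩ := hp
      have hmono : ∀ (m : ℕ) (G : S2), ((X 3:R) ^ m * X i - emb G ∈ (Igen (k := k))) →
          ∃ (n' : ℕ) (F' : S2), (X 3 : R) ^ n' * (p * X i) - emb F' ∈ (Igen (k := k)) := by
        intro m G hmG
        refine ⟨n + m, F * G, ?_⟩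
        have hm := Ideal.add_mem _
          (Ideal.mul_mem_left _ ((X 3:R) ^ m * X i) h)
          (Ideal.mul_mem_left _ (emb F) hmG)
        convert hm using 1
        rw [map_mul]
        ring
      fin_cases i
      · refine hmono 0 (X 0) ?_
        rw [emb_X0]
        simp [Submodule.zero_mem]
      · refine hmono 1 (-(X 0 ^ 2)) ?_
        rw [map_neg, map_pow, emb_X0]
        show (X 3:R) ^ 1 * X 1 - -(X 0 ^ 2) ∈ _
        have : (X 3:R) ^ 1 * X 1 - -(X 0 ^ 2) = f0 := by rw [f0]; ring
        rw [this]
        exact f0_mem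
      · refine hmono 3 (-(X 0 ^ 4)) ?_
        rw [map_neg, map_pow, emb_X0]
        show (X 3:R) ^ 3 * X 2 - -(X 0 ^ 4) ∈ _
        have hcomb : (X 3:R) ^ 3 * X 2 - -(X 0 ^ 4) =
            (X 3:R) ^ 2 * f1 - (X 1 * X 3 - X 0 ^ 2) * f0 := by
          rw [f0, f1]; ring
        rw [hcomb]
        exact Ideal.sub_mem _ (Ideal.mul_mem_left _ _ f1_mem) (Ideal.mul_mem_left _ _ f0_mem)
      · refine hmono 0 (X 1) ?_
        rw [emb_X1]
        simp [Submodule.zero_mem]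

lemma field_ids {K : Type} [Field K] (a b : K) (hb : b ≠ 0) (h7 : a ^ 7 + b ^ 7 = 0) :
    a ^ 2 + -(a^2/b) * b = 0 ∧ (-(a^2/b)) ^ 2 + -(a^4/b^3) * b = 0 ∧
      (-(a^4/b^3)) ^ 2 + a * b = 0 ∧ b ^ 3 * -(a^4/b^3) + a ^ 4 = 0 := by
  refine ⟨by field_simp; ring, by field_simp; ring, ?_, by field_simp; ring⟩
  field_simp
  linear_combination a * h7

lemma case3_core (P : Ideal R) [hP : P.IsPrime] (hIP : (Igen (k := k)) ≤ P)
    (hx3 : (X 3 : R) ∉ P) (hx0 : (X 0 : R) ∉ P)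
    (G : S2) (hGprime : Prime G) (hgP : (emb G : R) ∈ P)
    {K : Type} [Field K] (π : S2 →+* K)
    (hπdvd : ∀ F : S2, π F = 0 ↔ G ∣ F)
    (hπh2 : π (X 0) ^ 7 + π (X 1) ^ 7 = 0) :
    ∃ q1 q2 q3 : Ideal R, q1.IsPrime ∧ q2.IsPrime ∧ q3.IsPrime ∧
      ⊥ < q1 ∧ q1 < q2 ∧ q2 < q3 ∧ q3 ≤ P := by
  classical
  set g : R := emb G with hgdef
  have hgprime : Prime g := prime_emb hGprime
  have hπG : π G = 0 := (hπdvd G).mpr dvd_rfl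
  set a := π (X 0) with ha
  set b := π (X 1) with hbdef
  have hbne : b ≠ 0 := by
    intro hb0
    obtain ⟨c, hc⟩ := (hπdvd (X 1)).mp hb0
    have hX3 : (X 3 : R) = g * emb c := by
      rw [← emb_X1, hc, map_mul, hgdef]
    rw [hX3] at hx3
    exact hx3 (Ideal.mul_mem_right _ _ hgP)
  obtain ⟨hs0, hs1, hs2, hs3⟩ := field_ids a b hbne hπh2
  -- φ
  set χ : k →+* K := π.comp (C : k →+* S2) with hχ
  set vφ : Fin 4 → K := ![a, -(a^2/b), -(a^4/b^3), b] with hvφ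
  set φ : MvPolynomial (Fin 4) k →+* K := eval₂Hom χ vφ with hφdef
  have hφX0 : φ (X 0) = a := by rw [hφdef, eval₂Hom_X', hvφ]; rfl
  have hφX1 : φ (X 1) = -(a^2/b) := by rw [hφdef, eval₂Hom_X', hvφ]; rfl
  have hφX2 : φ (X 2) = -(a^4/b^3) := by rw [hφdef, eval₂Hom_X', hvφ]; rfl
  have hφX3 : φ (X 3) = b := by rw [hφdef, eval₂Hom_X', hvφ]; rfl
  have hφemb : ∀ F : S2, φ (emb F) = π F := by
    have hhom : φ.comp (emb (k := k)).toRingHom = π := by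
      apply MvPolynomial.ringHom_ext
      · intro c
        show φ (emb (C c)) = π (C c)
        rw [emb_C, hφdef, eval₂Hom_C, hχ, RingHom.comp_apply]
      · intro i
        fin_cases i
        · show φ (emb (X 0)) = π (X 0)
          rw [emb_X0, hφX0, ha]
        · show φ (emb (X 1)) = π (X 1)
          rw [emb_X1, hφX3, hbdef]
    exact fun F => RingHom.congr_fun hhom F
  have hφf0 : φ (f0 : R) = 0 := by
    rw [f0, map_add, map_pow, map_mul, hφX0, hφX1, hφX3]; exact hs0
  have hφf1 : φ (f1 : R) = 0 := by
    rw [f1, map_add, map_pow, map_mul, hφX1, hφX2, hφX3]; exact hs1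
  have hφf2 : φ (f2 : R) = 0 := by
    rw [f2, map_add, map_pow, map_mul, hφX2, hφX0, hφX3]; exact hs2
  have hφt4 : φ (X 3 ^ 3 * X 2 + X 0 ^ 4 : R) = 0 := by
    rw [map_add, map_mul, map_pow, map_pow, hφX3, hφX2, hφX0]; exact hs3
  -- ρ
  set vρ : Fin 4 → Polynomial K :=
    ![Polynomial.C a, Polynomial.C (-(a^2/b)), Polynomial.X, Polynomial.C b] with hvρ
  set ρ : MvPolynomial (Fin 4) k →+* Polynomial K :=
    eval₂Hom (Polynomial.C.comp χ) vρ with hρdef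
  have hρX0 : ρ (X 0) = Polynomial.C a := by rw [hρdef, eval₂Hom_X', hvρ]; rfl
  have hρX1 : ρ (X 1) = Polynomial.C (-(a^2/b)) := by rw [hρdef, eval₂Hom_X', hvρ]; rfl
  have hρX2 : ρ (X 2) = Polynomial.X := by rw [hρdef, eval₂Hom_X', hvρ]; rfl
  have hρX3 : ρ (X 3) = Polynomial.C b := by rw [hρdef, eval₂Hom_X', hvρ]; rfl
  have hρemb : ∀ F : S2, ρ (emb F) = Polynomial.C (π F) := by
    have hhom : ρ.comp (emb (k := k)).toRingHom = Polynomial.C.comp π := by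
      apply MvPolynomial.ringHom_ext
      · intro c
        show ρ (emb (C c)) = Polynomial.C (π (C c))
        rw [emb_C, hρdef, eval₂Hom_C]
        rfl
      · intro i
        fin_cases i
        · show ρ (emb (X 0)) = Polynomial.C (π (X 0))
          rw [emb_X0, hρX0, ha]
        · show ρ (emb (X 1)) = Polynomial.C (π (X 1))
          rw [emb_X1, hρX3, hbdef]
    exact fun F => RingHom.congr_fun hhom F
  have hρg : ρ g = 0 := by rw [hgdef, hρemb, hπG, map_zero]
  have hρf0 : ρ (f0 : R) = 0 := by
    rw [f0, map_add, map_pow, map_mul, hρX0, hρX1, hρX3, ← Polynomial.C_pow,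
      ← Polynomial.C_mul, ← Polynomial.C_add, hs0, Polynomial.C_0]
  have hcompφρ : (Polynomial.evalRingHom (-(a^4/b^3))).comp ρ = φ := by
    apply MvPolynomial.ringHom_ext
    · intro c
      show Polynomial.evalRingHom (-(a^4/b^3)) (ρ (C c)) = φ (C c)
      rw [hρdef, eval₂Hom_C, hφdef, eval₂Hom_C]
      simp
    · intro i
      fin_cases i
      · show Polynomial.evalRingHom (-(a^4/b^3)) (ρ (X 0)) = φ (X 0)
        rw [hρX0, hφX0]; simp
      · show Polynomial.evalRingHom (-(a^4/b^3)) (ρ (X 1)) = φ (X 1)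
        rw [hρX1, hφX1]; simp
      · show Polynomial.evalRingHom (-(a^4/b^3)) (ρ (X 2)) = φ (X 2)
        rw [hρX2, hφX2]; simp
      · show Polynomial.evalRingHom (-(a^4/b^3)) (ρ (X 3)) = φ (X 3)
        rw [hρX3, hφX3]; simp
  have hp2Q : RingHom.ker ρ ≤ RingHom.ker φ := by
    intro f hf
    have hf' : ρ f = 0 := hf
    show φ f = 0
    rw [← hcompφρ]
    show Polynomial.evalRingHom (-(a^4/b^3)) (ρ f) = 0
    rw [hf', map_zero]
  have hρt4 : ρ (X 3 ^ 3 * X 2 + X 0 ^ 4 : R) =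
      Polynomial.C (b^3) * Polynomial.X + Polynomial.C (a^4) := by
    rw [map_add, map_mul, map_pow, map_pow, hρX3, hρX2, hρX0, ← Polynomial.C_pow,
      ← Polynomial.C_pow]
  have hρt4ne : ρ (X 3 ^ 3 * X 2 + X 0 ^ 4 : R) ≠ 0 := by
    rw [hρt4]
    intro h
    have hcoeff : (Polynomial.C (b^3) * Polynomial.X + Polynomial.C (a^4)).coeff 1 = b^3 := by
      rw [Polynomial.coeff_add, Polynomial.coeff_C_mul, Polynomial.coeff_X_one,
        Polynomial.coeff_C]
      simp
    rw [h, Polynomial.coeff_zero] at hcoeff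
    exact pow_ne_zero 3 hbne hcoeff.symm
  have hQP : RingHom.ker φ ≤ P := by
    intro f hf
    have hfφ : φ f = 0 := hf
    obtain ⟨n, F, hred⟩ := reduce f
    have hφembF : φ (emb F) = 0 := by
      have h1 : φ ((X 3:R) ^ n * f - emb F) = 0 := by
        have hIk : ∀ x ∈ Igen (k := k), φ x = 0 := by
          intro x hx
          have hm : x ∈ RingHom.ker φ := by
            refine Ideal.span_le.mpr ?_ hx
            intro y hy
            simp only [Set.mem_insert_iff, Set.mem_singleton_iff] at hy
            rcases hy with rfl | rfl | rfl
            · exact RingHom.mem_ker.mpr hφf0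
            · exact RingHom.mem_ker.mpr hφf1
            · exact RingHom.mem_ker.mpr hφf2
          exact RingHom.mem_ker.mp hm
        exact hIk _ hred
      have h2 : φ ((X 3:R) ^ n * f) = 0 := by rw [map_mul, hfφ, mul_zero]
      have h3 : φ (emb F) = φ ((X 3:R) ^ n * f) - φ ((X 3:R) ^ n * f - emb F) := by
        rw [← map_sub]
        congr 1
        ring
      rw [h3, h1, h2, sub_zero]
    have hGdvdF : G ∣ F := (hπdvd F).mp (by rw [← hφemb]; exact hφembF)
    have hembF_P : emb F ∈ P := by
      obtain ⟨c, hc⟩ := hGdvdF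
      rw [hc, map_mul, ← hgdef]
      exact Ideal.mul_mem_right _ _ hgP
    have hXnf : (X 3:R) ^ n * f ∈ P := by
      have hsplit : (X 3:R) ^ n * f = ((X 3:R) ^ n * f - emb F) + emb F := by ring
      rw [hsplit]
      exact Ideal.add_mem _ (hIP hred) hembF_P
    rcases hP.mem_or_mem hXnf with h | h
    · exact absurd (hP.mem_of_pow_mem _ h) hx3
    · exact h
  have hgQ : Ideal.span {g} ≤ RingHom.ker ρ := by
    rw [Ideal.span_le]
    intro x hx
    rw [Set.mem_singleton_iff] at hx
    subst hx
    exact hρg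
  have hf0notg : (f0 : R) ∉ Ideal.span {g} := by
    intro hmem
    rw [Ideal.mem_span_singleton] at hmem
    set θ : MvPolynomial (Fin 4) k →ₐ[k] MvPolynomial (Fin 4) k := aeval ![X 0, 0, X 2, X 3]
      with hθ
    have hθemb : ∀ F : S2, θ (emb F) = emb F := by
      have hhom : (θ.toRingHom).comp (emb (k := k)).toRingHom = (emb (k := k)).toRingHom := by
        apply MvPolynomial.ringHom_ext
        · intro c
          show θ (emb (C c)) = emb (C c)
          rw [emb_C, hθ]
          simp
        · intro i
          fin_cases i
          · show θ (emb (X 0)) = emb (X 0)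
            rw [emb_X0, hθ]
            simp
          · show θ (emb (X 1)) = emb (X 1)
            rw [emb_X1, hθ]
            simp
      exact fun F => RingHom.congr_fun hhom F
    have hθg : θ g = g := hθemb G
    have hθf0 : θ (f0 : R) = X 0 ^ 2 := by
      rw [f0, map_add, map_pow, map_mul, hθ]
      simp
    have hdvd2 : g ∣ (X 0:R) ^ 2 := by
      obtain ⟨c, hc⟩ := hmem
      refine ⟨θ c, ?_⟩
      rw [← hθf0, hc, map_mul, hθg]
    obtain ⟨c, hc⟩ := hgprime.dvd_of_dvd_pow hdvd2
    rw [hc] at hx0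
    exact hx0 (Ideal.mul_mem_right _ _ hgP)
  haveI : (Ideal.span {g}).IsPrime := (Ideal.span_singleton_prime hgprime.ne_zero).mpr hgprime
  refine ⟨Ideal.span {g}, RingHom.ker ρ, RingHom.ker φ,
    inferInstance, RingHom.ker_isPrime _, RingHom.ker_isPrime _, ?_, ?_, ?_, hQP⟩
  · refine lt_of_le_of_ne bot_le (fun h => ?_)
    exact hgprime.ne_zero (Ideal.span_singleton_eq_bot.mp h.symm)
  · refine lt_of_le_of_ne hgQ (fun h => ?_)
    have hm : (f0 : R) ∈ Ideal.span {g} := by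
      have : (f0 : R) ∈ RingHom.ker ρ := hρf0
      rwa [← h] at this
    exact hf0notg hm
  · refine lt_of_le_of_ne hp2Q (fun h => ?_)
    have ht4 : (X 3 ^ 3 * X 2 + X 0 ^ 4 : R) ∈ RingHom.ker ρ := by
      have : (X 3 ^ 3 * X 2 + X 0 ^ 4 : R) ∈ RingHom.ker φ := hφt4
      rwa [← h] at this
    exact hρt4ne ht4

set_option maxHeartbeats 1000000 in
set_option synthInstance.maxHeartbeats 400000 in
lemma case3 (P : Ideal R) [hP : P.IsPrime] (hIP : (Igen (k := k)) ≤ P)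
    (hx3 : (X 3 : R) ∉ P) (hx0 : (X 0 : R) ∉ P) :
    ∃ q1 q2 q3 : Ideal R, q1.IsPrime ∧ q2.IsPrime ∧ q3.IsPrime ∧
      ⊥ < q1 ∧ q1 < q2 ∧ q2 < q3 ∧ q3 ≤ P := by
  classical
  have hkey : ((X 0:R) ^ 8 + X 0 * X 3 ^ 7) ∈ Igen (k := k) := by
    have hc : (X 0:R) ^ 8 + X 0 * X 3 ^ 7 =
        (X 0^2 - X 1*X 3)*(X 0^4 + X 1^2*X 3^2) * f0
          + X 3^4*(X 1^2 - X 2*X 3) * f1 + X 3^6 * f2 := by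
      rw [f0, f1, f2]; ring
    rw [hc]
    exact Ideal.add_mem _ (Ideal.add_mem _ (Ideal.mul_mem_left _ _ f0_mem)
      (Ideal.mul_mem_left _ _ f1_mem)) (Ideal.mul_mem_left _ _ f2_mem)
  have hhP : ((X 0:R) ^ 7 + X 3 ^ 7) ∈ P := by
    have hm : (X 0:R) * (X 0 ^ 7 + X 3 ^ 7) ∈ P := by
      have hq : (X 0:R) * (X 0 ^ 7 + X 3 ^ 7) = X 0 ^ 8 + X 0 * X 3 ^ 7 := by ring
      rw [hq]; exact hIP hkey
    exact (hP.mem_or_mem hm).resolve_left hx0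
  set h₂ : S2 := X 0 ^ 7 + X 1 ^ 7 with hh₂
  have hembh : (emb h₂ : R) = X 0 ^ 7 + X 3 ^ 7 := by
    rw [hh₂, map_add, map_pow, map_pow, emb_X0, emb_X1]
  set P₂ : Ideal S2 := Ideal.comap (emb (k := k)).toRingHom P with hP₂def
  haveI hP₂ : P₂.IsPrime := Ideal.IsPrime.comap _
  have hh2P2 : h₂ ∈ P₂ := by
    show emb h₂ ∈ P
    rw [hembh]; exact hhP
  have hh2ne : h₂ ≠ 0 := by
    intro h
    have h' := congrArg (eval ![(1:k), 0]) h
    rw [hh₂] at h'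
    simp at h'
  obtain ⟨u, hu⟩ := UniqueFactorizationMonoid.factors_prod hh2ne
  have hprodP2 : (UniqueFactorizationMonoid.factors h₂).prod ∈ P₂ := by
    have hmm : (UniqueFactorizationMonoid.factors h₂).prod * u ∈ P₂ := by rw [hu]; exact hh2P2
    rcases hP₂.mem_or_mem hmm with h | h
    · exact h
    · exact absurd (P₂.eq_top_of_isUnit_mem h u.isUnit) hP₂.ne_top
  obtain ⟨G, hGfac, hGP2⟩ := (hP₂.multiset_prod_mem_iff_exists_mem _).mp hprodP2
  have hGprime : Prime G := UniqueFactorizationMonoid.prime_of_factor G hGfac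
  have hGdvd : G ∣ h₂ := UniqueFactorizationMonoid.dvd_of_mem_factors hGfac
  haveI hGspan : (Ideal.span {G}).IsPrime :=
    (Ideal.span_singleton_prime hGprime.ne_zero).mpr hGprime
  set Dq := S2 ⧸ Ideal.span {G} with hDq
  haveI : IsDomain Dq := Ideal.Quotient.isDomain (Ideal.span {G})
  set π : S2 →+* FractionRing Dq :=
    (algebraMap Dq (FractionRing Dq)).comp (Ideal.Quotient.mk (Ideal.span {G})) with hπ
  have hπdvd : ∀ F : S2, π F = 0 ↔ G ∣ F := by
    intro F
    constructor
    · intro hF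
      have h1 : Ideal.Quotient.mk (Ideal.span {G}) F = 0 := by
        apply IsFractionRing.injective Dq (FractionRing Dq)
        rw [map_zero]; exact hF
      rwa [Ideal.Quotient.eq_zero_iff_mem, Ideal.mem_span_singleton] at h1
    · intro hF
      have h1 : Ideal.Quotient.mk (Ideal.span {G}) F = 0 := by
        rw [Ideal.Quotient.eq_zero_iff_mem, Ideal.mem_span_singleton]
        exact hF
      rw [hπ, RingHom.comp_apply, h1, map_zero]
  have hπh2 : π (X 0) ^ 7 + π (X 1) ^ 7 = 0 := by
    have h1 : π h₂ = 0 := by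
      obtain ⟨c, hc⟩ := hGdvd
      have hG0 : π G = 0 := (hπdvd G).mpr dvd_rfl
      rw [hc, map_mul, hG0, zero_mul]
    rw [hh₂, map_add, map_pow, map_pow] at h1
    exact h1
  exact case3_core P hIP hx3 hx0 G hGprime hGP2 π hπdvd hπh2



/-! ### Dimension bound -/

lemma exists_indep : ∀ (n : ℕ) (p : Fin (n+1) → PrimeSpectrum (MvPolynomial (Fin 4) k)),
    StrictMono p → ∃ v : Fin n → MvPolynomial (Fin 4) k,
      AlgebraicIndependent k (fun i => Ideal.Quotient.mk (p 0).asIdeal (v i)) := by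
  intro n
  induction n with
  | zero =>
      intro p _
      refine ⟨Fin.elim0, ?_⟩
      rw [algebraicIndependent_empty_type_iff]
      haveI : (p 0).asIdeal.IsPrime := (p 0).isPrime
      haveI : Nontrivial (MvPolynomial (Fin 4) k ⧸ (p 0).asIdeal) :=
        Ideal.Quotient.nontrivial_iff.mpr (p 0).isPrime.ne_top
      exact RingHom.injective _
  | succ n ih =>
      intro p hp
      have hmono : StrictMono (fun i : Fin (n+1) => p i.succ) :=
        fun i j hij => hp (Fin.succ_lt_succ_iff.mpr hij)
      obtain ⟨v, hv⟩ := ih (fun i => p i.succ) hmono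
      have h01 : p 0 < p 1 := hp (by norm_num : (0 : Fin (n+2)) < 1)
      obtain ⟨f, hfq, hfp⟩ := SetLike.exists_of_lt (show (p 0).asIdeal < (p 1).asIdeal from h01)
      haveI : (p 0).asIdeal.IsPrime := (p 0).isPrime
      haveI : (p 1).asIdeal.IsPrime := (p 1).isPrime
      refine ⟨Fin.cons f v, ?_⟩
      have := indep_extend k (p 0).asIdeal (p 1).asIdeal (le_of_lt h01) f hfq hfp v
        (by exact hv)
      convert this using 2

lemma dim_le_four (c : LTSeries (PrimeSpectrum (MvPolynomial (Fin 4) k))) : c.length ≤ 4 := by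
  by_contra hlen
  push_neg at hlen
  obtain ⟨v, hv⟩ := exists_indep c.length (fun i => c.toFun i) c.strictMono
  haveI : ((c.toFun 0).asIdeal).IsPrime := (c.toFun 0).isPrime
  have hlift : AlgebraicIndependent k v := by
    have := hv.of_comp (Ideal.Quotient.mkₐ k (c.toFun 0).asIdeal)
    exact this
  have h5 : AlgebraicIndependent k (v ∘ Fin.castLE (by omega : 5 ≤ c.length)) :=
    hlift.comp _ (Fin.castLE_injective _)
  exact no_five_indep _ h5

lemma le_height_of_chain {α : Type*} [Preorder α] (a b c d : α)
    (h1 : a < b) (h2 : b < c) (h3 : c < d) : 3 ≤ Order.height d := by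
  have hstep : ∀ (i : Fin 3), (![a,b,c,d] : Fin 4 → α) i.castSucc < ![a,b,c,d] i.succ := by
    intro i
    fin_cases i <;> simpa using by assumption
  let p : LTSeries α := ⟨3, ![a,b,c,d], hstep⟩
  have hlast : p.last = d := rfl
  have := Order.length_le_height (x := d) (p := p) (le_of_eq hlast)
  exact_mod_cast this

lemma height_le_three_of_lt (d top : PrimeSpectrum (MvPolynomial (Fin 4) k)) (hlt : d < top) :
    Order.height d ≤ 3 := by
  apply Order.height_le
  intro p hlast
  have h4 := dim_le_four (p.snoc top (hlast ▸ hlt))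
  rw [RelSeries.snoc_length] at h4
  exact_mod_cast (by omega : p.length ≤ 3)

/-! ### Assembly -/

lemma ps_lt {A : Type*} [CommRing A] {I J : Ideal A} [hI : I.IsPrime] [hJ : J.IsPrime]
    (h : I < J) : (⟨I, hI⟩ : PrimeSpectrum A) < ⟨J, hJ⟩ := by
  rw [lt_iff_le_and_ne]
  exact ⟨h.le, fun he => h.ne (congrArg PrimeSpectrum.asIdeal he)⟩

lemma all_vars_mem (P : Ideal R) [hP : P.IsPrime] (hIP : (Igen (k := k)) ≤ P)
    (hx3 : (X 3 : R) ∉ P) (h012 : (X 0:R) ∈ P ∨ (X 1:R) ∈ P ∨ (X 2:R) ∈ P) :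
    (X 0:R) ∈ P ∧ (X 1:R) ∈ P ∧ (X 2:R) ∈ P := by
  have hf0 : (f0 : R) ∈ P := hIP f0_mem
  have hf1 : (f1 : R) ∈ P := hIP f1_mem
  have hf2 : (f2 : R) ∈ P := hIP f2_mem
  have step01 : (X 0:R) ∈ P → (X 1:R) ∈ P := by
    intro h0
    have hm : (X 1:R) * X 3 ∈ P := by
      have he : (X 1:R) * X 3 = f0 - X 0 ^ 2 := by rw [f0]; ring
      rw [he]
      exact Ideal.sub_mem _ hf0 (Ideal.pow_mem_of_mem P h0 2 (by norm_num))
    exact (hP.mem_or_mem hm).resolve_right hx3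
  have step12 : (X 1:R) ∈ P → (X 2:R) ∈ P := by
    intro h1
    have hm : (X 2:R) * X 3 ∈ P := by
      have he : (X 2:R) * X 3 = f1 - X 1 ^ 2 := by rw [f1]; ring
      rw [he]
      exact Ideal.sub_mem _ hf1 (Ideal.pow_mem_of_mem P h1 2 (by norm_num))
    exact (hP.mem_or_mem hm).resolve_right hx3
  have step20 : (X 2:R) ∈ P → (X 0:R) ∈ P := by
    intro h2
    have hm : (X 0:R) * X 3 ∈ P := by
      have he : (X 0:R) * X 3 = f2 - X 2 ^ 2 := by rw [f2]; ring
      rw [he]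
      exact Ideal.sub_mem _ hf2 (Ideal.pow_mem_of_mem P h2 2 (by norm_num))
    exact (hP.mem_or_mem hm).resolve_right hx3
  rcases h012 with h | h | h
  · exact ⟨h, step01 h, step12 (step01 h)⟩
  · exact ⟨step20 (step12 h), h, step12 h⟩
  · exact ⟨step20 h, step01 (step20 h), h⟩

lemma lower_bound (P : Ideal R) [hP : P.IsPrime] (hIP : (Igen (k := k)) ≤ P) :
    3 ≤ Order.height (⟨P, hP⟩ : PrimeSpectrum (MvPolynomial (Fin 4) k)) := by
  have hK12 : (K1 (k := k)) < K2 :=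
    lt_of_le_of_ne K1_le_K2 (fun h => X1_not_mem_K1 (h ▸ X1_mem_K2))
  have hK23 : (K2 (k := k)) < K3 :=
    lt_of_le_of_ne K2_le_K3 (fun h => X2_not_mem_K2 (h ▸ X2_mem_K3))
  have hbotK1 : (⊥ : Ideal R) < K1 := by
    refine lt_of_le_of_ne bot_le (fun h => ?_)
    have : (X 0 : R) ∈ (⊥ : Ideal R) := by rw [h]; exact X0_mem_K1
    rw [Ideal.mem_bot] at this
    exact MvPolynomial.X_ne_zero 0 this
  by_cases hx3 : (X 3 : R) ∈ P
  · -- all variables are in P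
    have hf0 : (f0 : R) ∈ P := hIP f0_mem
    have hf1 : (f1 : R) ∈ P := hIP f1_mem
    have hf2 : (f2 : R) ∈ P := hIP f2_mem
    have h0 : (X 0:R) ∈ P := by
      refine hP.mem_of_pow_mem 2 ?_
      have he : (X 0:R)^2 = f0 - X 1 * X 3 := by rw [f0]; ring
      rw [he]
      exact Ideal.sub_mem _ hf0 (Ideal.mul_mem_left _ _ hx3)
    have h1 : (X 1:R) ∈ P := by
      refine hP.mem_of_pow_mem 2 ?_
      have he : (X 1:R)^2 = f1 - X 2 * X 3 := by rw [f1]; ring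
      rw [he]
      exact Ideal.sub_mem _ hf1 (Ideal.mul_mem_left _ _ hx3)
    have h2 : (X 2:R) ∈ P := by
      refine hP.mem_of_pow_mem 2 ?_
      have he : (X 2:R)^2 = f2 - X 0 * X 3 := by rw [f2]; ring
      rw [he]
      exact Ideal.sub_mem _ hf2 (Ideal.mul_mem_left _ _ hx3)
    have hK3P : (K3 (k := k)) < P :=
      lt_of_le_of_ne (K3_le_of_vars h0 h1 h2) (fun h => X3_not_mem_K3 (h ▸ hx3))
    exact le_height_of_chain _ _ _ _ (ps_lt hK12) (ps_lt hK23) (ps_lt hK3P)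
  · by_cases h012 : (X 0:R) ∈ P ∨ (X 1:R) ∈ P ∨ (X 2:R) ∈ P
    · obtain ⟨h0, h1, h2⟩ := all_vars_mem P hIP hx3 h012
      have hK3le : (K3 (k := k)) ≤ P := K3_le_of_vars h0 h1 h2
      by_cases hK3P : (K3 (k := k)) = P
      · subst hK3P
        exact le_height_of_chain _ _ _ _ (ps_lt (hI := Ideal.bot_prime) hbotK1)
          (ps_lt hK12) (ps_lt hK23)
      · exact le_height_of_chain _ _ _ _ (ps_lt hK12) (ps_lt hK23)
          (ps_lt (lt_of_le_of_ne hK3le hK3P))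
    · push_neg at h012
      obtain ⟨hx0, hx1, hx2⟩ := h012
      obtain ⟨q1, q2, q3, hq1, hq2, hq3, hb1, h12, h23, h3P⟩ := case3 P hIP hx3 hx0
      haveI := hq1; haveI := hq2; haveI := hq3
      by_cases hq3P : q3 = P
      · subst hq3P
        exact le_height_of_chain _ _ _ _ (ps_lt (hI := Ideal.bot_prime) hb1)
          (ps_lt h12) (ps_lt h23)
      · exact le_height_of_chain _ _ _ _ (ps_lt h12) (ps_lt h23)
          (ps_lt (lt_of_le_of_ne h3P hq3P))

end CIaux

theorem stmt_1 (k : Type) [Field k] [CharZero k] :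
    idealHeight (Ideal.span {(X 0 : MvPolynomial (Fin 4) k) ^ 2 + X 1 * X 3,
        (X 1 : MvPolynomial (Fin 4) k) ^ 2 + X 2 * X 3,
        (X 2 : MvPolynomial (Fin 4) k) ^ 2 + X 0 * X 3}) = 3 := by
  have hIgen : Ideal.span {(X 0 : MvPolynomial (Fin 4) k) ^ 2 + X 1 * X 3,
        (X 1 : MvPolynomial (Fin 4) k) ^ 2 + X 2 * X 3,
        (X 2 : MvPolynomial (Fin 4) k) ^ 2 + X 0 * X 3} = CIaux.Igen (k := k) := by
    rw [CIaux.Igen, CIaux.f0, CIaux.f1, CIaux.f2]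
  rw [hIgen]
  apply le_antisymm
  · -- upper bound via Pstar
    have hmem : (⟨CIaux.Pstar, CIaux.Pstar_prime⟩ : PrimeSpectrum (MvPolynomial (Fin 4) k)) ∈
        {P : PrimeSpectrum (MvPolynomial (Fin 4) k) | CIaux.Igen (k := k) ≤ P.asIdeal} :=
      CIaux.Igen_le_Pstar
    have hle : Order.height (⟨CIaux.Pstar, CIaux.Pstar_prime⟩ :
        PrimeSpectrum (MvPolynomial (Fin 4) k)) ≤ 3 :=
      CIaux.height_le_three_of_lt _ ⟨CIaux.Mstar, CIaux.Mstar_prime⟩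
        (CIaux.ps_lt CIaux.Pstar_lt_Mstar)
    exact le_trans (iInf₂_le _ hmem) hle
  · rw [idealHeight]
    refine le_iInf₂ fun P hP => ?_
    haveI : P.asIdeal.IsPrime := P.isPrime
    have := CIaux.lower_bound P.asIdeal hP
    convert this using 2
end
end

section
/- In a commutative ring R, if J ⊆ I are ideals with I^{n+1} = J·I^n for some n, then for any ideal K with I ⊆ K and K^{m+1} = J'·K^m, it does NOT follow in general that the cores satisfy core(I) ⊆ core(K); concretely, there exist a Noetherian local ring R and integrally closed ideals I ⊆ I' with core(I) ⊄ core(I'). -/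
set_option maxHeartbeats 1000000


/-- `J` is a reduction of `I` if `J ⊆ I` and `I^(n+1) = J·I^n` for some `n`. -/
def IsReduction {R : Type*} [CommRing R] (J I : Ideal R) : Prop :=
  J ≤ I ∧ ∃ n : ℕ, I ^ (n + 1) = J * I ^ n

/-- The core of an ideal: the intersection of all its reductions. -/
def core {R : Type*} [CommRing R] (I : Ideal R) : Ideal R :=
  sInf {J : Ideal R | IsReduction J I}

/-- An ideal is integrally closed if every element integral over it lies in it. -/
def IsIntegrallyClosedIdeal {R : Type*} [CommRing R] (I : Ideal R) : Prop :=
  ∀ r : R,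
    (∃ n : ℕ, 0 < n ∧ ∃ a : ℕ → R, (∀ i ∈ Finset.Icc 1 n, a i ∈ I ^ i) ∧
      r ^ n + ∑ i ∈ Finset.Icc 1 n, a i * r ^ (n - i) = 0) → r ∈ I

/-! ### Auxiliary development -/

noncomputable section StmtAux

open Polynomial

/-- If `p` is prime in a domain and `r` satisfies an equation of integral dependence over
`(p^2)`, then `p^2 ∣ r`. -/
lemma aux_sq_dvd {D : Type*} [CommRing D] [IsDomain D] {p : D} (hp : Prime p)
    {n : ℕ} (hn : 0 < n) {r : D} {a : ℕ → D}
    (ha : ∀ i ∈ Finset.Icc 1 n, a i ∈ (Ideal.span {p ^ 2}) ^ i)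
    (heq : r ^ n + ∑ i ∈ Finset.Icc 1 n, a i * r ^ (n - i) = 0) : p ^ 2 ∣ r := by
  have hb : ∀ i ∈ Finset.Icc 1 n, (p ^ 2) ^ i ∣ a i := by
    intro i hi
    have hmem := ha i hi
    rwa [Ideal.span_singleton_pow, Ideal.mem_span_singleton] at hmem
  have hpr : p ∣ r := by
    apply hp.dvd_of_dvd_pow (n := n)
    have hdvd : p ∣ ∑ i ∈ Finset.Icc 1 n, a i * r ^ (n - i) := by
      refine Finset.dvd_sum fun i hi => ?_
      obtain ⟨hi1, _⟩ := Finset.mem_Icc.mp hi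
      have h1 : p ∣ (p ^ 2) ^ i := dvd_pow (dvd_pow_self p two_ne_zero) (by omega)
      exact ((h1.trans (hb i hi)).mul_right _)
    have : r ^ n = -(∑ i ∈ Finset.Icc 1 n, a i * r ^ (n - i)) :=
      eq_neg_of_add_eq_zero_left heq
    rw [this]
    exact hdvd.neg_right
  obtain ⟨c, hc⟩ := id hpr
  have hsum : p ^ (n + 1) ∣ ∑ i ∈ Finset.Icc 1 n, a i * r ^ (n - i) := by
    refine Finset.dvd_sum fun i hi => ?_
    obtain ⟨hi1, hi2⟩ := Finset.mem_Icc.mp hi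
    have h1 : p ^ (2 * i) ∣ a i := by
      rw [pow_mul]; exact hb i hi
    have h2 : p ^ (n - i) ∣ r ^ (n - i) := pow_dvd_pow_of_dvd hpr _
    have h3 : p ^ (2 * i + (n - i)) ∣ a i * r ^ (n - i) := by
      rw [pow_add]; exact mul_dvd_mul h1 h2
    exact (pow_dvd_pow p (by omega)).trans h3
  obtain ⟨E, hE⟩ := hsum
  have heq2 : p ^ n * (c ^ n + p * E) = 0 := by
    rw [mul_add, ← mul_pow, ← hc, ← mul_assoc, ← pow_succ, ← hE]
    exact heq
  have hne : p ^ n ≠ 0 := pow_ne_zero n hp.ne_zero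
  have h4 : c ^ n + p * E = 0 := by
    rcases mul_eq_zero.mp heq2 with h | h
    · exact absurd h hne
    · exact h
  have h5 : p ∣ c := by
    apply hp.dvd_of_dvd_pow (n := n)
    have : c ^ n = p * (-E) := by
      have := eq_neg_of_add_eq_zero_left h4
      rw [this, mul_neg]
    exact ⟨-E, this⟩
  obtain ⟨d, hd⟩ := h5
  exact ⟨d, by rw [hc, hd]; ring⟩

/-- In a domain, the ideal generated by the square of a prime is integrally closed. -/
lemma aux_sq_closed {D : Type*} [CommRing D] [IsDomain D] {p : D} (hp : Prime p) :
    IsIntegrallyClosedIdeal (Ideal.span {p ^ 2}) := by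
  rintro r ⟨n, hn, a, ha, heq⟩
  rw [Ideal.mem_span_singleton]
  exact aux_sq_dvd hp hn ha heq

/-- In a domain, a nonzero `g` lies in every reduction of `(g)`, hence in its core. -/
lemma aux_mem_core {D : Type*} [CommRing D] [IsDomain D] {g : D} (hg : g ≠ 0) :
    g ∈ core (Ideal.span {g}) := by
  rw [core]
  refine Submodule.mem_sInf.mpr ?_
  rintro J ⟨hle, n, hpow⟩
  have h1 : g ^ (n + 1) ∈ Ideal.span ({g} : Set D) ^ (n + 1) := by
    rw [Ideal.span_singleton_pow]
    exact Ideal.subset_span rfl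
  rw [hpow, Ideal.span_singleton_pow] at h1
  obtain ⟨z, hzJ, hz⟩ := Ideal.mem_mul_span_singleton.mp h1
  have hz' : z * g ^ n = g * g ^ n := by rw [hz, pow_succ']
  have : z = g := mul_right_cancel₀ (pow_ne_zero n hg) hz'
  exact this ▸ hzJ

/-- A decomposition of a polynomial extracting its two lowest coefficients. -/
lemma aux_decomp {S : Type*} [CommRing S] (b : Polynomial S) :
    ∃ q, b = Polynomial.C (b.coeff 0) + Polynomial.C (b.coeff 1) * Polynomial.X +
      Polynomial.X ^ 2 * q := by
  have hdvd : (Polynomial.X : Polynomial S) ^ 2 ∣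
      b - Polynomial.C (b.coeff 0) - Polynomial.C (b.coeff 1) * Polynomial.X := by
    rw [Polynomial.X_pow_dvd_iff]
    intro d hd
    interval_cases d <;>
      simp [Polynomial.coeff_sub, Polynomial.coeff_C, Polynomial.coeff_C_mul,
        Polynomial.coeff_X]
  obtain ⟨q, hq⟩ := hdvd
  exact ⟨q, by linear_combination hq⟩

/-- The base ring : polynomials in two variables over `ℚ`. -/
abbrev AuxA : Type := Polynomial (Polynomial ℚ)

/-- Evaluation of both variables at `0`. -/
def auxEps : AuxA →+* ℚ :=
  (Polynomial.evalRingHom (0 : ℚ)).comp (Polynomial.evalRingHom (0 : Polynomial ℚ))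

lemma auxEps_apply (p : AuxA) : auxEps p = (p.eval 0).eval 0 := rfl

lemma auxEps_eq (p : AuxA) : auxEps p = (p.coeff 0).coeff 0 := by
  rw [auxEps_apply, ← Polynomial.coeff_zero_eq_eval_zero, ← Polynomial.coeff_zero_eq_eval_zero]

/-- The maximal ideal at the origin. -/
def auxP : Ideal AuxA := RingHom.ker auxEps

lemma auxEps_surj : Function.Surjective auxEps := fun q =>
  ⟨Polynomial.C (Polynomial.C q), by simp [auxEps_apply]⟩

instance auxP_max : auxP.IsMaximal := RingHom.ker_isMaximal_of_surjective _ auxEps_surj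

/-- The local ring: `ℚ[x,y]` localized at the origin. -/
def AuxR : Type := Localization.AtPrime auxP

instance : CommRing AuxR := inferInstanceAs (CommRing (Localization.AtPrime auxP))

instance : IsDomain AuxR :=
  (inferInstanceAs (IsDomain (Localization auxP.primeCompl)) : _)

instance : Algebra AuxA AuxR := inferInstanceAs (Algebra AuxA (Localization.AtPrime auxP))

instance : IsLocalization auxP.primeCompl AuxR :=
  inferInstanceAs (IsLocalization auxP.primeCompl (Localization.AtPrime auxP))

instance : IsLocalRing AuxR := IsLocalization.AtPrime.isLocalRing AuxR auxP

instance : IsNoetherianRing AuxR :=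
  IsLocalization.isNoetherianRing auxP.primeCompl AuxR inferInstance

/-- The localization map. -/
def auxPhi : AuxA →+* AuxR := algebraMap _ _

/-- The image of `x`. -/
def auxX : AuxR := auxPhi Polynomial.X

/-- The image of `y`. -/
def auxY : AuxR := auxPhi (Polynomial.C Polynomial.X)

lemma auxPhi_inj : Function.Injective auxPhi :=
  IsLocalization.injective AuxR auxP.primeCompl_le_nonZeroDivisors

lemma auxX_ne_zero : auxX ≠ 0 := by
  intro h
  have : (Polynomial.X : AuxA) = 0 := auxPhi_inj (by simpa [auxX] using h)
  exact Polynomial.X_ne_zero this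

lemma auxX_prime : Prime auxX := by
  have hx : Prime (Polynomial.X : AuxA) := Polynomial.prime_X
  have hd : Disjoint (auxP.primeCompl : Set AuxA)
      ((Ideal.span {(Polynomial.X : AuxA)} : Ideal AuxA) : Set AuxA) := by
    rw [Set.disjoint_left]
    rintro s hs hsx
    rw [SetLike.mem_coe, Ideal.mem_span_singleton] at hsx
    obtain ⟨c, rfl⟩ := hsx
    apply hs
    simp [auxP, RingHom.mem_ker, auxEps_apply]
  have hprime := IsLocalization.isPrime_of_isPrime_disjoint auxP.primeCompl AuxR
    (Ideal.span {(Polynomial.X : AuxA)})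
    ((Ideal.span_singleton_prime hx.ne_zero).mpr hx) hd
  rw [Ideal.map_span, Set.image_singleton] at hprime
  exact (Ideal.span_singleton_prime auxX_ne_zero).mp hprime

lemma auxPhi_eq : auxPhi = algebraMap AuxA AuxR := rfl

/-- The small ideal `I = (x²)`. -/
def auxI : Ideal AuxR := Ideal.span {auxX ^ 2}

/-- The big ideal `I' = (x², xy, y²)`. -/
def auxI' : Ideal AuxR := Ideal.span {auxX ^ 2, auxX * auxY, auxY ^ 2}

/-- A reduction `J = (x² - y², xy)` of `I'`. -/
def auxJ : Ideal AuxR := Ideal.span {auxX ^ 2 - auxY ^ 2, auxX * auxY}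

lemma mem_auxI'_1 : auxX ^ 2 ∈ auxI' := by
  show auxX ^ 2 ∈ Ideal.span {auxX ^ 2, auxX * auxY, auxY ^ 2}
  exact Ideal.subset_span (by simp)

lemma mem_auxI'_2 : auxX * auxY ∈ auxI' := by
  show auxX * auxY ∈ Ideal.span {auxX ^ 2, auxX * auxY, auxY ^ 2}
  exact Ideal.subset_span (by simp)

lemma mem_auxI'_3 : auxY ^ 2 ∈ auxI' := by
  show auxY ^ 2 ∈ Ideal.span {auxX ^ 2, auxX * auxY, auxY ^ 2}
  exact Ideal.subset_span (by simp)

lemma mem_auxJ_1 : auxX ^ 2 - auxY ^ 2 ∈ auxJ := by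
  show _ ∈ Ideal.span {auxX ^ 2 - auxY ^ 2, auxX * auxY}
  exact Ideal.subset_span (by simp)

lemma mem_auxJ_2 : auxX * auxY ∈ auxJ := by
  show _ ∈ Ideal.span {auxX ^ 2 - auxY ^ 2, auxX * auxY}
  exact Ideal.subset_span (by simp)

/-- `ℚ[y] → ℚ⟦T⟧`, `y ↦ T`. -/
def auxV : Polynomial ℚ →+* PowerSeries ℚ :=
  Polynomial.eval₂RingHom (PowerSeries.C (R := ℚ)) PowerSeries.X

lemma auxV_C (a : ℚ) : auxV (Polynomial.C a) = PowerSeries.C (R := ℚ) a := by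
  simp [auxV, Polynomial.coe_eval₂RingHom]

lemma auxV_X : auxV Polynomial.X = PowerSeries.X := by
  simp [auxV, Polynomial.coe_eval₂RingHom]

/-- `ℚ[x,y] → ℚ⟦T⟧`, `x ↦ l·T`, `y ↦ T`. -/
def auxU (l : ℚ) : AuxA →+* PowerSeries ℚ :=
  Polynomial.eval₂RingHom auxV (PowerSeries.C (R := ℚ) l * PowerSeries.X)

lemma auxU_C (l : ℚ) (b : Polynomial ℚ) : auxU l (Polynomial.C b) = auxV b := by
  simp [auxU, Polynomial.coe_eval₂RingHom]

lemma auxU_X (l : ℚ) : auxU l Polynomial.X = PowerSeries.C (R := ℚ) l * PowerSeries.X := by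
  simp [auxU, Polynomial.coe_eval₂RingHom]

lemma aux_ps_coeff01 {w : PowerSeries ℚ} (h : (PowerSeries.X : PowerSeries ℚ) ^ 2 ∣ w) :
    PowerSeries.coeff (R := ℚ) 0 w = 0 ∧ PowerSeries.coeff (R := ℚ) 1 w = 0 := by
  rw [PowerSeries.X_pow_dvd_iff] at h
  exact ⟨h 0 (by norm_num), h 1 (by norm_num)⟩

lemma auxV_coeff (b : Polynomial ℚ) :
    PowerSeries.coeff (R := ℚ) 0 (auxV b) = b.coeff 0 ∧
      PowerSeries.coeff (R := ℚ) 1 (auxV b) = b.coeff 1 := by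
  obtain ⟨q, hq⟩ := aux_decomp b
  have hVb : auxV b = PowerSeries.C (R := ℚ) (b.coeff 0) + PowerSeries.C (R := ℚ) (b.coeff 1) *
      PowerSeries.X + PowerSeries.X ^ 2 * auxV q := by
    conv_lhs => rw [hq]
    rw [map_add, map_add, map_mul, map_mul, map_pow, auxV_C, auxV_C, auxV_X]
  obtain ⟨hq0, hq1⟩ := aux_ps_coeff01 (Dvd.intro (auxV q) rfl)
  constructor
  · rw [hVb, map_add, map_add, hq0, PowerSeries.coeff_zero_C,
      PowerSeries.coeff_zero_mul_X, add_zero, add_zero]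
  · rw [hVb, map_add, map_add, hq1, add_zero, PowerSeries.coeff_C]
    rw [mul_comm (PowerSeries.C (R := ℚ) (b.coeff 1)) PowerSeries.X,
      PowerSeries.coeff_succ_X_mul, PowerSeries.coeff_zero_C]
    norm_num

lemma auxU_coeff (l : ℚ) (a : AuxA) :
    PowerSeries.coeff (R := ℚ) 0 (auxU l a) = (a.coeff 0).coeff 0 ∧
      PowerSeries.coeff (R := ℚ) 1 (auxU l a) = (a.coeff 0).coeff 1 + l * (a.coeff 1).coeff 0 := by
  obtain ⟨q, hq⟩ := aux_decomp a
  have hUa : auxU l a = auxV (a.coeff 0) + auxV (a.coeff 1) * (PowerSeries.C (R := ℚ) l *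
      PowerSeries.X) + (PowerSeries.C (R := ℚ) l * PowerSeries.X) ^ 2 * auxU l q := by
    conv_lhs => rw [hq]
    rw [map_add, map_add, map_mul, map_mul, map_pow, auxU_C, auxU_C, auxU_X]
  have hsq : (PowerSeries.C (R := ℚ) l * PowerSeries.X) ^ 2 * auxU l q =
      PowerSeries.X ^ 2 * ((PowerSeries.C (R := ℚ) l) ^ 2 * auxU l q) := by ring
  obtain ⟨hq0, hq1⟩ := aux_ps_coeff01 (w := (PowerSeries.C (R := ℚ) l * PowerSeries.X) ^ 2 * auxU l q)
    ⟨(PowerSeries.C (R := ℚ) l) ^ 2 * auxU l q, hsq⟩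
  have hmid : auxV (a.coeff 1) * (PowerSeries.C (R := ℚ) l * PowerSeries.X) =
      (auxV (a.coeff 1) * PowerSeries.C (R := ℚ) l) * PowerSeries.X := by ring
  obtain ⟨hV0, hV1⟩ := auxV_coeff (a.coeff 0)
  obtain ⟨hW0, _⟩ := auxV_coeff (a.coeff 1)
  constructor
  · rw [hUa, map_add, map_add, hq0, add_zero, hV0, hmid, PowerSeries.coeff_zero_mul_X, add_zero]
  · rw [hUa, map_add, map_add, hq1, add_zero, hV1, hmid]
    rw [mul_comm (auxV (a.coeff 1) * PowerSeries.C (R := ℚ) l) PowerSeries.X,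
      PowerSeries.coeff_succ_X_mul]
    rw [PowerSeries.coeff_zero_eq_constantCoeff_apply, map_mul, PowerSeries.constantCoeff_C,
      ← PowerSeries.coeff_zero_eq_constantCoeff_apply, hW0]
    ring

lemma auxU_unit (l : ℚ) {s : AuxA} (hs : s ∈ auxP.primeCompl) : IsUnit (auxU l s) := by
  rw [PowerSeries.isUnit_iff_constantCoeff]
  have h0 : PowerSeries.constantCoeff (R := ℚ) (auxU l s) = (s.coeff 0).coeff 0 := by
    rw [← PowerSeries.coeff_zero_eq_constantCoeff_apply]
    exact (auxU_coeff l s).1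
  rw [h0]
  have : auxEps s ≠ 0 := hs
  rw [auxEps_eq] at this
  exact isUnit_iff_ne_zero.mpr this

/-- The lift `R → ℚ⟦T⟧` of `auxU l`. -/
def auxPsi (l : ℚ) : AuxR →+* PowerSeries ℚ :=
  IsLocalization.lift (S := AuxR) (fun s : auxP.primeCompl => auxU_unit l s.2)

lemma auxPsi_phi (l : ℚ) (a : AuxA) : auxPsi l (auxPhi a) = auxU l a :=
  IsLocalization.lift_eq _ _

lemma auxI'_eq_map : auxI' = Ideal.map auxPhi (Ideal.span
    {(Polynomial.X : AuxA) ^ 2, Polynomial.X * Polynomial.C Polynomial.X,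
      (Polynomial.C Polynomial.X : AuxA) ^ 2}) := by
  rw [Ideal.map_span]
  congr 1
  simp only [Set.image_insert_eq, Set.image_singleton, map_mul, map_pow]
  rfl

lemma auxPsi_I' (l : ℚ) : Ideal.map (auxPsi l) auxI' ≤
    Ideal.span {(PowerSeries.X : PowerSeries ℚ) ^ 2} := by
  have hX : auxPsi l auxX = PowerSeries.C (R := ℚ) l * PowerSeries.X := by
    rw [auxX, auxPsi_phi, auxU_X]
  have hY : auxPsi l auxY = PowerSeries.X := by
    rw [auxY, auxPsi_phi, auxU_C, auxV_X]
  rw [auxI', Ideal.map_span]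
  refine Ideal.span_le.mpr ?_
  rintro z hz
  simp only [Set.image_insert_eq, Set.image_singleton, Set.mem_insert_iff,
    Set.mem_singleton_iff] at hz
  rcases hz with h | h | h <;> subst h <;> rw [SetLike.mem_coe, Ideal.mem_span_singleton]
  · exact ⟨PowerSeries.C (R := ℚ) l ^ 2, by rw [map_pow, hX]; ring⟩
  · exact ⟨PowerSeries.C (R := ℚ) l, by rw [map_mul, hX, hY]; ring⟩
  · exact ⟨1, by rw [map_pow, hY]; ring⟩

lemma auxI'_closed : IsIntegrallyClosedIdeal (R := AuxR) auxI' := by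
  rintro r ⟨n, hn, a, ha, heq⟩
  have hTdvd : ∀ l : ℚ, (PowerSeries.X : PowerSeries ℚ) ^ 2 ∣ auxPsi l r := by
    intro l
    apply aux_sq_dvd (PowerSeries.X_prime (R := ℚ)) hn (a := fun i => auxPsi l (a i))
    · intro i hi
      have h1 : auxPsi l (a i) ∈ Ideal.map (auxPsi l) (auxI' ^ i) :=
        Ideal.mem_map_of_mem _ (ha i hi)
      rw [Ideal.map_pow] at h1
      exact Ideal.pow_right_mono (auxPsi_I' l) i h1
    · have h2 := congrArg (auxPsi l) heq
      simpa [map_add, map_pow, map_sum, map_mul] using h2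
  obtain ⟨⟨aA, s⟩, hr⟩ := IsLocalization.mk'_surjective auxP.primeCompl r
  have hUdvd : ∀ l : ℚ, (PowerSeries.X : PowerSeries ℚ) ^ 2 ∣ auxU l aA := by
    intro l
    have hspec : r * auxPhi (s : AuxA) = auxPhi aA := by
      rw [← hr]; exact IsLocalization.mk'_spec AuxR aA s
    have h3 := congrArg (auxPsi l) hspec
    rw [map_mul, auxPsi_phi, auxPsi_phi] at h3
    exact h3 ▸ (hTdvd l).mul_right _
  have h0 := aux_ps_coeff01 (hUdvd 0)
  have h1 := aux_ps_coeff01 (hUdvd 1)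
  have e00 : (aA.coeff 0).coeff 0 = 0 := by
    rw [← (auxU_coeff 0 aA).1]; exact h0.1
  have e01 : (aA.coeff 0).coeff 1 = 0 := by
    have h := (auxU_coeff 0 aA).2
    rw [h0.2] at h
    simpa using h.symm
  have e10 : (aA.coeff 1).coeff 0 = 0 := by
    have h := (auxU_coeff 1 aA).2
    rw [h1.2, e01] at h
    simpa using h.symm
  obtain ⟨c0, hc0⟩ : (Polynomial.X : Polynomial ℚ) ^ 2 ∣ aA.coeff 0 := by
    rw [Polynomial.X_pow_dvd_iff]
    intro d hd
    interval_cases d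
    exacts [e00, e01]
  obtain ⟨c1, hc1⟩ : (Polynomial.X : Polynomial ℚ) ∣ aA.coeff 1 :=
    Polynomial.X_dvd_iff.mpr e10
  obtain ⟨q, hq⟩ := aux_decomp aA
  have haA : aA ∈ Ideal.span {(Polynomial.X : AuxA) ^ 2,
      Polynomial.X * Polynomial.C Polynomial.X, (Polynomial.C Polynomial.X : AuxA) ^ 2} := by
    rw [hq, hc0, hc1]
    have m3 : (Polynomial.C (Polynomial.X ^ 2 * c0) : AuxA) =
        (Polynomial.C Polynomial.X) ^ 2 * Polynomial.C c0 := by rw [map_mul, map_pow]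
    have m2 : (Polynomial.C (Polynomial.X * c1) : AuxA) * Polynomial.X =
        (Polynomial.X * Polynomial.C Polynomial.X) * Polynomial.C c1 := by
      rw [map_mul]; ring
    rw [m3, m2]
    refine Ideal.add_mem _ (Ideal.add_mem _ ?_ ?_) ?_
    · exact Ideal.mul_mem_right _ _ (Ideal.subset_span (by simp))
    · exact Ideal.mul_mem_right _ _ (Ideal.subset_span (by simp))
    · exact Ideal.mul_mem_right _ _ (Ideal.subset_span (by simp))
  rw [auxI'_eq_map, auxPhi_eq, ← hr]
  exact (IsLocalization.mk'_mem_map_algebraMap_iff auxP.primeCompl AuxR _ aA s).mpr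
    ⟨1, Submonoid.one_mem _, by simpa using haA⟩

lemma auxJ_le : auxJ ≤ auxI' := by
  rw [auxJ]
  refine Ideal.span_le.mpr ?_
  rintro z hz
  simp only [Set.mem_insert_iff, Set.mem_singleton_iff] at hz
  rw [SetLike.mem_coe]
  rcases hz with h | h <;> subst h
  · exact Ideal.sub_mem _ mem_auxI'_1 mem_auxI'_3
  · exact mem_auxI'_2

lemma auxJ_red : IsReduction (R := AuxR) auxJ auxI' := by
  refine ⟨auxJ_le, 1, ?_⟩
  have g1 := mem_auxJ_1
  have g2 := mem_auxJ_2
  have i1 := mem_auxI'_1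
  have i3 := mem_auxI'_3
  have i2 := mem_auxI'_2
  have hle1 : auxI' ^ 2 ≤ auxJ * auxI' := by
    rw [pow_two, auxI', Ideal.span_mul_span']
    refine Ideal.span_le.mpr ?_
    rintro z hz
    rw [Set.mem_mul] at hz
    obtain ⟨p, hp, w, hw, rfl⟩ := hz
    simp only [Set.mem_insert_iff, Set.mem_singleton_iff] at hp hw
    rw [SetLike.mem_coe]
    rcases hp with rfl | rfl | rfl <;> rcases hw with rfl | rfl | rfl
    · rw [show auxX ^ 2 * auxX ^ 2 =
        (auxX ^ 2 - auxY ^ 2) * auxX ^ 2 + (auxX * auxY) * (auxX * auxY) by ring]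
      exact Ideal.add_mem _ (Ideal.mul_mem_mul g1 i1) (Ideal.mul_mem_mul g2 i2)
    · rw [show auxX ^ 2 * (auxX * auxY) = (auxX * auxY) * auxX ^ 2 by ring]
      exact Ideal.mul_mem_mul g2 i1
    · rw [show auxX ^ 2 * auxY ^ 2 = (auxX * auxY) * (auxX * auxY) by ring]
      exact Ideal.mul_mem_mul g2 i2
    · rw [show auxX * auxY * auxX ^ 2 = (auxX * auxY) * auxX ^ 2 by ring]
      exact Ideal.mul_mem_mul g2 i1
    · exact Ideal.mul_mem_mul g2 i2
    · exact Ideal.mul_mem_mul g2 i3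
    · rw [show auxY ^ 2 * auxX ^ 2 = (auxX * auxY) * (auxX * auxY) by ring]
      exact Ideal.mul_mem_mul g2 i2
    · rw [show auxY ^ 2 * (auxX * auxY) = (auxX * auxY) * auxY ^ 2 by ring]
      exact Ideal.mul_mem_mul g2 i3
    · rw [show auxY ^ 2 * auxY ^ 2 =
        (auxX * auxY) * (auxX * auxY) - (auxX ^ 2 - auxY ^ 2) * auxY ^ 2 by ring]
      exact Ideal.sub_mem _ (Ideal.mul_mem_mul g2 i2) (Ideal.mul_mem_mul g1 i3)
  have hle2 : auxJ * auxI' ≤ auxI' ^ 2 := by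
    rw [pow_two]; exact Ideal.mul_mono auxJ_le le_rfl
  rw [pow_one]
  exact le_antisymm hle1 hle2

lemma auxX_sq_not_mem_J : auxX ^ 2 ∉ auxJ := by
  intro hmem
  have hJmap : auxJ = Ideal.map auxPhi (Ideal.span
      {(Polynomial.X : AuxA) ^ 2 - (Polynomial.C Polynomial.X) ^ 2,
        Polynomial.X * Polynomial.C Polynomial.X}) := by
    rw [Ideal.map_span]
    congr 1
    simp only [Set.image_insert_eq, Set.image_singleton, map_sub, map_mul, map_pow]
    rfl
  rw [hJmap] at hmem
  have hmem' : auxPhi (Polynomial.X ^ 2) ∈ Ideal.map auxPhi (Ideal.span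
      {(Polynomial.X : AuxA) ^ 2 - (Polynomial.C Polynomial.X) ^ 2,
        Polynomial.X * Polynomial.C Polynomial.X}) := by
    rw [map_pow]; exact hmem
  rw [auxPhi_eq] at hmem'
  rw [IsLocalization.mem_map_algebraMap_iff auxP.primeCompl AuxR] at hmem'
  obtain ⟨⟨⟨j, hj⟩, s⟩, heq⟩ := hmem'
  have heqA : (Polynomial.X : AuxA) ^ 2 * (s : AuxA) = j := by
    apply auxPhi_inj
    rw [map_mul]
    exact heq
  rw [← heqA, Ideal.mem_span_pair] at hj
  obtain ⟨u, v, huv⟩ := hj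
  have hu : (Polynomial.X : AuxA) ∣ u := by
    rw [Polynomial.X_dvd_iff]
    have h5 := congrArg (Polynomial.evalRingHom (0 : Polynomial ℚ)) huv
    simp only [map_add, map_mul, map_sub, map_pow, Polynomial.coe_evalRingHom,
      Polynomial.eval_X, Polynomial.eval_C] at h5
    have h6 : u.eval 0 * (Polynomial.X : Polynomial ℚ) ^ 2 = 0 := by
      linear_combination -h5
    rcases mul_eq_zero.mp h6 with h | h
    · rwa [Polynomial.coeff_zero_eq_eval_zero]
    · exact absurd h (pow_ne_zero 2 Polynomial.X_ne_zero)
  obtain ⟨u', rfl⟩ := hu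
  have hcan : (Polynomial.X : AuxA) * (u' * (Polynomial.X ^ 2 -
      (Polynomial.C Polynomial.X) ^ 2) + v * Polynomial.C Polynomial.X) =
      Polynomial.X * (Polynomial.X * (s : AuxA)) := by
    linear_combination huv
  have h7 := mul_left_cancel₀ (Polynomial.X_ne_zero (R := Polynomial ℚ)) hcan
  have h8 := congrArg (Polynomial.mapRingHom (Polynomial.evalRingHom (0 : ℚ))) h7
  simp only [Polynomial.coe_mapRingHom, Polynomial.map_add, Polynomial.map_mul,
    Polynomial.map_sub, Polynomial.map_pow, Polynomial.map_X, Polynomial.map_C,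
    Polynomial.coe_evalRingHom, Polynomial.eval_X, Polynomial.C_0] at h8
  -- h8 : mu' * (X^2 - 0^2) + mv * 0 = X * ms
  have h9 : (Polynomial.map (Polynomial.evalRingHom (0 : ℚ)) (s : AuxA)).coeff 0 = 0 := by
    have hL : (Polynomial.X : Polynomial ℚ) ^ 2 ∣
        Polynomial.X * Polynomial.map (Polynomial.evalRingHom (0 : ℚ)) (s : AuxA) := by
      rw [← h8]
      exact ⟨Polynomial.map (Polynomial.evalRingHom (0 : ℚ)) u', by ring⟩
    have := (Polynomial.X_pow_dvd_iff.mp hL) 1 (by norm_num)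
    rwa [Polynomial.coeff_X_mul] at this
  have h10 : auxEps (s : AuxA) = 0 := by
    rw [Polynomial.coeff_map] at h9
    rw [auxEps_eq]
    simpa [Polynomial.coeff_zero_eq_eval_zero] using h9
  exact s.2 h10

end StmtAux

theorem stmt_11 :
    ∃ (R : Type) (_ : CommRing R), IsNoetherianRing R ∧ IsLocalRing R ∧
      ∃ I I' : Ideal R, I ≤ I' ∧
        IsIntegrallyClosedIdeal I ∧ IsIntegrallyClosedIdeal I' ∧
        ¬ core I ≤ core I' := by
  refine ⟨AuxR, inferInstance, inferInstance, inferInstance, auxI, auxI', ?_, ?_,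
    auxI'_closed, ?_⟩
  · show Ideal.span {auxX ^ 2} ≤ auxI'
    exact Ideal.span_le.mpr (Set.singleton_subset_iff.mpr (SetLike.mem_coe.mpr mem_auxI'_1))
  · show IsIntegrallyClosedIdeal (Ideal.span {auxX ^ 2})
    exact aux_sq_closed auxX_prime
  · intro hle
    have h1 : auxX ^ 2 ∈ core auxI := by
      show auxX ^ 2 ∈ core (Ideal.span {auxX ^ 2})
      exact aux_mem_core (pow_ne_zero 2 auxX_ne_zero)
    have h2 : auxX ^ 2 ∈ core auxI' := hle h1
    have h3 : core auxI' ≤ auxJ := by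
      rw [core]
      exact sInf_le auxJ_red
    exact auxX_sq_not_mem_J (h3 h2)
end
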